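/- arXiv:math/0203014 — 3 statements merged into one kernel-verified Lean document; each statement's English description precedes it below -/
import Mathlib

section
/- For all λ > 0 and ε ≥ 0 there exist constants T = T(λ,ε) > 0 and K = K(λ,ε) > 0 such that every T-local (λ,ε)-quasigeodesic in a 1-hyperbolic geodesic metric space is a (K,K)-quasigeodesic. -/
set_option linter.unusedVariables false

/-- A geodesic segment from `a` to `b`: the image of an isometric
parameterization of the interval `[0, dist a b]`. -/
def IsGeodesicSegment {X : Type*} [MetricSpace X] (s : Set X) (a b : X) : Prop :=
  ∃ f : ℝ → X, f 0 = a ∧ f (dist a b) = b ∧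
    (∀ t₁ ∈ Set.Icc (0 : ℝ) (dist a b), ∀ t₂ ∈ Set.Icc (0 : ℝ) (dist a b),
      dist (f t₁) (f t₂) = |t₁ - t₂|) ∧
    s = f '' Set.Icc (0 : ℝ) (dist a b)

/-- A geodesic metric space: any two points are joined by a geodesic segment. -/
def GeodesicSpace (X : Type*) [MetricSpace X] : Prop :=
  ∀ a b : X, ∃ s : Set X, IsGeodesicSegment s a b

/-- `A` is contained in the `r`-neighborhood of `B`. -/
def InNbhd {X : Type*} [MetricSpace X] (A B : Set X) (r : ℝ) : Prop :=
  ∀ p ∈ A, ∃ q ∈ B, dist p q ≤ r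

/-- `δ`-hyperbolicity: every geodesic triangle is `δ`-thin, i.e. each side is
contained in the `δ`-neighborhood of the union of the other two sides. -/
def DeltaHyperbolic (X : Type*) [MetricSpace X] (δ : ℝ) : Prop :=
  ∀ a b c : X, ∀ sab sac sbc : Set X,
    IsGeodesicSegment sab a b → IsGeodesicSegment sac a c → IsGeodesicSegment sbc b c →
    InNbhd sab (sac ∪ sbc) δ

/-- Elementary Nielsen moves on an `n`-tuple of elements of a group. -/
inductive NielsenMove {G : Type*} [Group G] {n : ℕ} : (Fin n → G) → (Fin n → G) → Prop
  | inv (g : Fin n → G) (i : Fin n) : NielsenMove g (Function.update g i (g i)⁻¹)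
  | mul (g : Fin n → G) (i j : Fin n) (hij : i ≠ j) :
      NielsenMove g (Function.update g i (g i * g j))
  | swap (g : Fin n → G) (i j : Fin n) (hij : i ≠ j) :
      NielsenMove g (g ∘ Equiv.swap i j)

/-- Nielsen equivalence: a finite chain of elementary Nielsen moves. -/
def NielsenEquiv {G : Type*} [Group G] {n : ℕ} (M M' : Fin n → G) : Prop :=
  Relation.ReflTransGen NielsenMove M M'

/-- The word metric on the free group `F(x_1, …, x_n)`:
the length of the reduced word representing `w⁻¹ * v`. -/
noncomputable def freeDist {n : ℕ} (w v : FreeGroup (Fin n)) : ℝ :=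
  ((w⁻¹ * v).toWord.length : ℝ)

/-- The orbit map (on the subgroup generated by the tuple `g`, identified with
a quotient of the free group via `FreeGroup.lift g`) is a quasi-isometric embedding
with respect to the word metric of the basis `g`. -/
def OrbitQIEmbed {G X : Type*} [Group G] [MetricSpace X] [MulAction G X]
    {n : ℕ} (x : X) (g : Fin n → G) : Prop :=
  ∃ lam eps : ℝ, 1 ≤ lam ∧ 0 ≤ eps ∧ ∀ w v : FreeGroup (Fin n),
    lam⁻¹ * freeDist w v - eps ≤ dist ((FreeGroup.lift g w) • x) ((FreeGroup.lift g v) • x) ∧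
    dist ((FreeGroup.lift g w) • x) ((FreeGroup.lift g v) • x) ≤ lam * freeDist w v + eps

/-- The sum of the displacements `|g_i|_x` of the members of a tuple. -/
noncomputable def tupleLen {G X : Type*} [Group G] [MetricSpace X] [MulAction G X]
    {n : ℕ} (x : X) (M : Fin n → G) : ℝ :=
  ∑ i, dist x (M i • x)

/-- A minimal tuple: `|M|_x ≤ |M'|_x + 1` for every Nielsen-equivalent tuple `M'`. -/
def MinimalTuple {G X : Type*} [Group G] [MetricSpace X] [MulAction G X]
    {n : ℕ} (x : X) (M : Fin n → G) : Prop :=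
  ∀ M' : Fin n → G, NielsenEquiv M M' → tupleLen x M ≤ tupleLen x M' + 1

/-- A freely reduced word in letters `(i, ±1)`: no letter is followed by its inverse. -/
def ReducedWord {n : ℕ} (l : List (Fin n × Bool)) : Prop :=
  l.Chain' fun a b => a.1 = b.1 → a.2 = b.2

/-- The element of `G` represented by a word in the tuple `g` and its inverses. -/
def wordProd {G : Type*} [Group G] {n : ℕ} (g : Fin n → G) (l : List (Fin n × Bool)) : G :=
  (l.map fun p => if p.2 then g p.1 else (g p.1)⁻¹).prod

/-- Conclusion (2): for freely reduced `u = g_{i_1}^{ε_1} ⋯ g_{i_k}^{ε_k}`, any geodesic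
`[x, ux]` lies in the `d`-neighborhood of the broken path
`[x, g_{i_1}^{ε_1} x] ∪ ⋯ ∪ g_{i_1}^{ε_1} ⋯ g_{i_{k-1}}^{ε_{k-1}} [x, g_{i_k}^{ε_k} x]`. -/
def BrokenPathNbhd {G X : Type*} [Group G] [MetricSpace X] [MulAction G X]
    {n : ℕ} (x : X) (g : Fin n → G) (d : ℝ) : Prop :=
  ∀ l : List (Fin n × Bool), l ≠ [] → ReducedWord l →
    ∀ S : Set X, IsGeodesicSegment S x (wordProd g l • x) →
    ∀ seg : ℕ → Set X,
      (∀ j < l.length, IsGeodesicSegment (seg j)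
        (wordProd g (l.take j) • x) (wordProd g (l.take (j + 1)) • x)) →
      ∀ p ∈ S, ∃ j < l.length, ∃ q ∈ seg j, dist p q ≤ d

/-- For freely reduced `u`, any geodesic `[x, ux]` lies in the
`max_i (|g_i|_x/2 + d)`-neighborhood of the orbit `Ux`. -/
def SegInOrbitNbhd {G X : Type*} [Group G] [MetricSpace X] [MulAction G X]
    {n : ℕ} (x : X) (g : Fin n → G) (d : ℝ) : Prop :=
  ∀ l : List (Fin n × Bool), l ≠ [] → ReducedWord l →
    ∀ S : Set X, IsGeodesicSegment S x (wordProd g l • x) →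
    ∀ p ∈ S, ∃ (w : FreeGroup (Fin n)) (i : Fin n),
      dist p ((FreeGroup.lift g w) • x) ≤ dist x (g i • x) / 2 + d

/-- Conclusion (3): for freely reduced `u = g_{i_1}^{ε_1} ⋯ g_{i_k}^{ε_k}` one has
`|u|_x ≥ |g_{i_j}|_x - d` for every letter occurring in `u`. -/
def LetterBound {G X : Type*} [Group G] [MetricSpace X] [MulAction G X]
    {n : ℕ} (x : X) (g : Fin n → G) (d : ℝ) : Prop :=
  ∀ l : List (Fin n × Bool), ReducedWord l → ∀ j : Fin l.length,
    dist x (g (l.get j).1 • x) - d ≤ dist x (wordProd g l • x)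

/-- Conclusion (4): every subsegment of a geodesic `[x, ux]`, `u ∈ U`, of length
greater than `d₄` meets the `max_i (|g_i|_x/2 - c)`-neighborhood of the orbit `Ux`. -/
def SubsegMeetsOrbit {G X : Type*} [Group G] [MetricSpace X] [MulAction G X]
    {n : ℕ} (x : X) (g : Fin n → G) (d₄ c : ℝ) : Prop :=
  ∀ w : FreeGroup (Fin n), ∀ S : Set X, IsGeodesicSegment S x ((FreeGroup.lift g w) • x) →
    ∀ a ∈ S, ∀ b ∈ S, ∀ τ : Set X, IsGeodesicSegment τ a b → τ ⊆ S → d₄ < dist a b →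
    ∃ p ∈ τ, ∃ (v : FreeGroup (Fin n)) (i : Fin n),
      dist p ((FreeGroup.lift g v) • x) ≤ dist x (g i • x) / 2 - c

/-- The dichotomy of Theorem 11 for an `(m+1)`-tuple `f` at base point `x`, with
constants `d₁, d₂, d₃, d₄` and parameter `c`. -/
def Thm11Alt {G X : Type*} [Group G] [MetricSpace X] [MulAction G X]
    {m : ℕ} (x : X) (f : Fin (m + 1) → G) (d₁ d₂ d₃ d₄ c : ℝ) : Prop :=
  (∃ f' : Fin (m + 1) → G, NielsenEquiv f f' ∧ (⨅ y : X, dist y (f' 0 • y)) ≤ d₁) ∨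
  (Function.Injective ⇑(FreeGroup.lift f) ∧ OrbitQIEmbed x f ∧ BrokenPathNbhd x f d₂ ∧
    SegInOrbitNbhd x f d₂ ∧ LetterBound x f d₃ ∧ SubsegMeetsOrbit x f d₄ c)

/-- A naturally parameterized `(λ, ε)`-quasigeodesic on the set `I ⊆ ℝ`. -/
def IsQuasigeodesicOn {X : Type*} [MetricSpace X] (α : ℝ → X) (I : Set ℝ)
    (lam eps : ℝ) : Prop :=
  (∀ s ∈ I, ∀ t ∈ I, dist (α s) (α t) ≤ |s - t|) ∧
  (∀ s ∈ I, ∀ t ∈ I, |s - t| ≤ lam * dist (α s) (α t) + eps)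

/-- A naturally parameterized `T`-local `(λ, ε)`-quasigeodesic on the set `I ⊆ ℝ`. -/
def IsLocalQuasigeodesicOn {X : Type*} [MetricSpace X] (α : ℝ → X) (I : Set ℝ)
    (T lam eps : ℝ) : Prop :=
  (∀ s ∈ I, ∀ t ∈ I, dist (α s) (α t) ≤ |s - t|) ∧
  (∀ s ∈ I, ∀ t ∈ I, |s - t| ≤ T → |s - t| ≤ lam * dist (α s) (α t) + eps)

/-- The data provided by Lemma 15 for the pair `(g, h)`: a point `r` together with
geodesic segments `[x,r]`, `[r,gx]`, `[r,ghx]` such that the broken paths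
`w_g = [x,r] ∪ [r,gx]`, `w_h = [gx,r] ∪ [r,ghx]`, `w_{gh} = [x,r] ∪ [r,ghx]` have
lengths at most `|g|_x + 2`, `|h|_x + 2`, `|gh|_x + 2` respectively and each lies in
the `2`-neighborhood of any geodesic segment joining its endpoints. -/
def Lemma15Data {G X : Type*} [Group G] [MetricSpace X] [MulAction G X]
    (x : X) (g h : G) (r : X) (sxr srg srgh : Set X) : Prop :=
  IsGeodesicSegment sxr x r ∧ IsGeodesicSegment srg r (g • x) ∧
  IsGeodesicSegment srgh r ((g * h) • x) ∧
  dist x r + dist r (g • x) ≤ dist x (g • x) + 2 ∧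
  dist (g • x) r + dist r ((g * h) • x) ≤ dist x (h • x) + 2 ∧
  dist x r + dist r ((g * h) • x) ≤ dist x ((g * h) • x) + 2 ∧
  (∀ S : Set X, IsGeodesicSegment S x (g • x) → InNbhd (sxr ∪ srg) S 2) ∧
  (∀ S : Set X, IsGeodesicSegment S (g • x) ((g * h) • x) → InNbhd (srg ∪ srgh) S 2) ∧
  (∀ S : Set X, IsGeodesicSegment S x ((g * h) • x) → InNbhd (sxr ∪ srgh) S 2)

/-- Conclusion (4) of Proposition 13, for products
`w = h₁ gₙ^{ε₁} h₂ gₙ^{ε₂} ⋯ hₗ gₙ^{εₗ} h_{l+1}` with `hᵢ ∈ H`. -/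
def Prop13Four {G X : Type*} [Group G] [MetricSpace X] [MulAction G X]
    (x : X) (H : Subgroup G) (gn : G) (T L : ℝ) : Prop :=
  ∀ l : ℕ, 1 ≤ l → ∀ (h : ℕ → G) (e : ℕ → ℤ),
    (∀ i ≤ l, h i ∈ H) →
    (∀ i < l, e i = 1 ∨ e i = -1) →
    (∀ i, 1 ≤ i → i < l → e (i - 1) = -(e i) → h i ≠ 1) →
    ∀ A : ℕ → G, A 0 = 1 → (∀ i < l, A (i + 1) = A i * h i * gn ^ (e i)) →
    ∀ S : Set X, IsGeodesicSegment S x ((A l * h l) • x) →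
    ∀ a ∈ S, ∀ b ∈ S, ∀ I : Set X, IsGeodesicSegment I a b → I ⊆ S → 10 * T ≤ dist a b →
    ∃ u v : G,
      ((∃ j < l, u = A j * h j ∧ v = A j * h j * gn ^ (e j)) ∨
        (∃ j ≤ l, u = A j ∧ v = A j * h j)) ∧
      ∃ Seg : Set X, IsGeodesicSegment Seg (u • x) (v • x) ∧
        ∃ a' ∈ Seg, ∃ b' ∈ Seg, ∃ τ : Set X, IsGeodesicSegment τ a' b' ∧ τ ⊆ Seg ∧
          T ≤ dist a' b' ∧ InNbhd τ I (2 * L + 100)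

namespace LG6

variable {X : Type*} [MetricSpace X]

/-- Gromov product of `x`, `y` at `w`. -/
noncomputable def gp (x y w : X) : ℝ := (dist x w + dist y w - dist x y) / 2

lemma gp_nonneg (x y w : X) : 0 ≤ gp x y w := by
  have h := dist_triangle x w y
  have h2 : dist w y = dist y w := dist_comm _ _
  unfold gp; linarith

lemma gp_symm (x y w : X) : gp x y w = gp y x w := by
  unfold gp; rw [dist_comm x y]; ring

lemma seg_add {S : Set X} {a b : X} (h : IsGeodesicSegment S a b) {q : X} (hq : q ∈ S) :
    dist a q + dist q b = dist a b := by
  obtain ⟨f, hf0, hfd, hiso, hSeq⟩ := h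
  rw [hSeq] at hq
  obtain ⟨u, hu, rfl⟩ := hq
  have h0 : (0:ℝ) ∈ Set.Icc (0:ℝ) (dist a b) := ⟨le_refl _, dist_nonneg⟩
  have hd : dist a b ∈ Set.Icc (0:ℝ) (dist a b) := ⟨dist_nonneg, le_refl _⟩
  have h1 := hiso 0 h0 u hu
  have h2 := hiso u hu (dist a b) hd
  rw [hf0] at h1; rw [hfd] at h2
  rw [h1, h2, abs_of_nonpos (by linarith [hu.1] : (0:ℝ) - u ≤ 0),
    abs_of_nonpos (by linarith [hu.2] : u - dist a b ≤ 0)]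
  ring

lemma seg_left_mem {S : Set X} {a b : X} (h : IsGeodesicSegment S a b) : a ∈ S := by
  obtain ⟨f, hf0, hfd, hiso, hSeq⟩ := h
  rw [hSeq]; exact ⟨0, ⟨le_refl _, dist_nonneg⟩, hf0⟩

lemma seg_right_mem {S : Set X} {a b : X} (h : IsGeodesicSegment S a b) : b ∈ S := by
  obtain ⟨f, hf0, hfd, hiso, hSeq⟩ := h
  rw [hSeq]; exact ⟨dist a b, ⟨dist_nonneg, le_refl _⟩, hfd⟩

lemma gp_le_dist_of_mem {S : Set X} {x z : X} (h : IsGeodesicSegment S x z) (w : X) {q : X}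
    (hq : q ∈ S) : gp x z w ≤ dist w q := by
  have hadd := seg_add h hq
  have e1 : dist x w ≤ dist x q + dist w q := by
    rw [dist_comm w q]; exact dist_triangle _ _ _
  have e2 : dist z w ≤ dist q z + dist w q := by
    rw [dist_comm q z, dist_comm w q]; exact dist_triangle _ _ _
  unfold gp; linarith

lemma exists_near_gp (hG : GeodesicSpace X) (hδ : DeltaHyperbolic X 1)
    {S : Set X} {x z : X} (hS : IsGeodesicSegment S x z) (w : X) :
    ∃ m ∈ S, dist w m ≤ gp x z w + 2 := by
  obtain ⟨f, hf0, hfd, hiso, hSeq⟩ := hS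
  have hS' : IsGeodesicSegment S x z := ⟨f, hf0, hfd, hiso, hSeq⟩
  set u₀ := (dist z x + dist w x - dist z w) / 2 with hu₀def
  have czx : dist z x = dist x z := dist_comm _ _
  have cwx : dist w x = dist x w := dist_comm _ _
  have czw : dist z w = dist w z := dist_comm _ _
  have hu₀0 : 0 ≤ u₀ := by
    have := dist_triangle z x w
    have : dist x w = dist w x := dist_comm _ _
    unfold u₀; linarith [dist_triangle z x w]
  have hu₀L : u₀ ≤ dist x z := by
    have := dist_triangle w z x
    unfold u₀; linarith
  have hu₀mem : u₀ ∈ Set.Icc (0:ℝ) (dist x z) := ⟨hu₀0, hu₀L⟩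
  have hm : f u₀ ∈ S := by rw [hSeq]; exact ⟨u₀, hu₀mem, rfl⟩
  have h0 : (0:ℝ) ∈ Set.Icc (0:ℝ) (dist x z) := ⟨le_refl _, dist_nonneg⟩
  have hxm : dist x (f u₀) = u₀ := by
    have := hiso 0 h0 u₀ hu₀mem
    rw [hf0] at this
    rw [this, abs_of_nonpos (by linarith : (0:ℝ) - u₀ ≤ 0)]; ring
  obtain ⟨S₁, hS₁⟩ := hG x w
  obtain ⟨S₂, hS₂⟩ := hG z w
  obtain ⟨q, hq, hmq⟩ := hδ x z w S S₁ S₂ hS' hS₁ hS₂ (f u₀) hm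
  refine ⟨f u₀, hm, ?_⟩
  rcases hq with hq | hq
  · have hadd := seg_add hS₁ hq
    have h1 : u₀ ≤ dist x q + 1 := by
      have := dist_triangle x q (f u₀)
      have hc : dist q (f u₀) = dist (f u₀) q := dist_comm _ _
      linarith [hxm ▸ this]
    have h2 : dist w (f u₀) ≤ dist w q + 1 := by
      have := dist_triangle w q (f u₀)
      have hc : dist q (f u₀) = dist (f u₀) q := dist_comm _ _
      linarith
    have hcq : dist w q = dist q w := dist_comm _ _
    unfold gp; linarith
  · have hadd := seg_add hS₂ hq
    have hzm : dist z (f u₀) = dist x z - u₀ := by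
      have hd : dist x z ∈ Set.Icc (0:ℝ) (dist x z) := ⟨dist_nonneg, le_refl _⟩
      have := hiso u₀ hu₀mem (dist x z) hd
      rw [hfd] at this
      rw [dist_comm z (f u₀), this, abs_of_nonpos (by linarith : u₀ - dist x z ≤ 0)]; ring
    have h1 : dist x z - u₀ ≤ dist z q + 1 := by
      have := dist_triangle z q (f u₀)
      have hc : dist q (f u₀) = dist (f u₀) q := dist_comm _ _
      linarith [hzm ▸ this]
    have h2 : dist w (f u₀) ≤ dist w q + 1 := by
      have := dist_triangle w q (f u₀)
      have hc : dist q (f u₀) = dist (f u₀) q := dist_comm _ _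
      linarith
    have hcq : dist w q = dist q w := dist_comm _ _
    unfold gp; linarith

lemma four_point (hG : GeodesicSpace X) (hδ : DeltaHyperbolic X 1) (x y z w : X) :
    min (gp x y w) (gp y z w) - 3 ≤ gp x z w := by
  obtain ⟨S, hS⟩ := hG x z
  obtain ⟨m, hm, hwm⟩ := exists_near_gp hG hδ hS w
  obtain ⟨Sxy, hSxy⟩ := hG x y
  obtain ⟨Szy, hSzy⟩ := hG z y
  obtain ⟨q, hq, hmq⟩ := hδ x z y S Sxy Szy hS hSxy hSzy m hm
  have hwq : dist w q ≤ dist w m + 1 := by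
    have := dist_triangle w m q; linarith
  rcases hq with hq | hq
  · have h1 := gp_le_dist_of_mem hSxy w hq
    have h2 := min_le_left (gp x y w) (gp y z w)
    linarith
  · have h1 := gp_le_dist_of_mem hSzy w hq
    have h2 := min_le_right (gp x y w) (gp y z w)
    have h3 : gp z y w = gp y z w := gp_symm _ _ _
    linarith

end LG6

namespace LG6
variable {X : Type*} [MetricSpace X]

lemma chain (fourpt : ∀ x y z w : X, min (gp x y w) (gp y z w) - 3 ≤ gp x z w)
    (x : ℕ → X) (D c : ℝ) (hc : 0 ≤ c) (hD : 2 * c + 7 ≤ D) (n : ℕ)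
    (hcons : ∀ i, i < n → D ≤ dist (x i) (x (i + 1)))
    (hgp : ∀ i, i + 2 ≤ n → gp (x i) (x (i + 2)) (x (i + 1)) ≤ c) :
    ∀ m, m ≤ n → (m < n → gp (x 0) (x (m + 1)) (x m) ≤ c + 3) ∧
      (m : ℝ) * (D - 2 * (c + 3)) ≤ dist (x 0) (x m) := by
  intro m
  induction m with
  | zero =>
    intro _
    constructor
    · intro _
      have h0 : gp (x 0) (x 1) (x 0) = 0 := by
        unfold gp; rw [dist_self, dist_comm (x 1) (x 0)]; ring
      linarith
    · simp [dist_nonneg]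
  | succ m ih =>
    intro hm1
    have hmn : m < n := by omega
    obtain ⟨ihgp, ihd⟩ := ih (by omega)
    have ham : gp (x 0) (x (m + 1)) (x m) ≤ c + 3 := ihgp hmn
    have hid : dist (x 0) (x (m + 1)) =
        dist (x 0) (x m) + dist (x m) (x (m + 1)) - 2 * gp (x 0) (x (m + 1)) (x m) := by
      unfold gp; rw [dist_comm (x (m + 1)) (x m)]; ring
    have hco := hcons m hmn
    constructor
    · intro hm2
      have hgpm := hgp m (by omega)
      have hfp := fourpt (x m) (x 0) (x (m + 2)) (x (m + 1))
      have hA : gp (x m) (x 0) (x (m + 1)) =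
          dist (x m) (x (m + 1)) - gp (x 0) (x (m + 1)) (x m) := by
        unfold gp
        rw [dist_comm (x m) (x 0), dist_comm (x (m + 1)) (x m)]
        ring
      have hAge : c + 4 ≤ gp (x m) (x 0) (x (m + 1)) := by rw [hA]; linarith
      show gp (x 0) (x (m + 2)) (x (m + 1)) ≤ c + 3
      by_contra hB
      push_neg at hB
      have : c + 3 < min (gp (x m) (x 0) (x (m + 1))) (gp (x 0) (x (m + 2)) (x (m + 1))) :=
        lt_min (by linarith) hB
      linarith
    · push_cast
      nlinarith [dist_nonneg (x := x 0) (y := x m)]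

lemma lemA (hG : GeodesicSpace X) (hδ : DeltaHyperbolic X 1) :
    ∀ n : ℕ, ∀ a b : ℝ, a ≤ b → b - a ≤ 2 ^ n →
      ∀ c : ℝ → X, (∀ s, s ∈ Set.Icc a b → ∀ t, t ∈ Set.Icc a b → dist (c s) (c t) ≤ |s - t|) →
      ∀ S : Set X, IsGeodesicSegment S (c a) (c b) →
      ∀ p ∈ S, ∃ t ∈ Set.Icc a b, dist p (c t) ≤ n + 1 := by
  intro n
  induction n with
  | zero =>
    intro a b hab hlen c hlip S hS p hp
    refine ⟨a, ⟨le_refl a, hab⟩, ?_⟩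
    have hadd := seg_add hS hp
    have h1 := hlip a ⟨le_refl a, hab⟩ b ⟨hab, le_refl b⟩
    have habs : |a - b| = b - a := by rw [abs_sub_comm]; exact abs_of_nonneg (by linarith)
    norm_num at hlen ⊢
    rw [dist_comm]
    linarith [dist_nonneg (x := p) (y := c b)]
  | succ n ih =>
    intro a b hab hlen c hlip S hS p hp
    set m := (a + b) / 2 with hmdef
    have ham : a ≤ m := by unfold m; linarith
    have hmb : m ≤ b := by unfold m; linarith
    have hpow : (2:ℝ) ^ (n + 1) = 2 ^ n * 2 := pow_succ 2 n
    obtain ⟨S₁, hS₁⟩ := hG (c a) (c m)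
    obtain ⟨S₂, hS₂⟩ := hG (c b) (c m)
    obtain ⟨q, hq, hpq⟩ := hδ (c a) (c b) (c m) S S₁ S₂ hS hS₁ hS₂ p hp
    rcases hq with hq | hq
    · have hlip' : ∀ s, s ∈ Set.Icc a m → ∀ t, t ∈ Set.Icc a m → dist (c s) (c t) ≤ |s - t| :=
        fun s hs t ht => hlip s ⟨hs.1, hs.2.trans hmb⟩ t ⟨ht.1, ht.2.trans hmb⟩
      obtain ⟨t, ht, hqt⟩ := ih a m ham (by linarith) c hlip' S₁ hS₁ q hq
      refine ⟨t, ⟨ht.1, ht.2.trans hmb⟩, ?_⟩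
      have := dist_triangle p q (c t)
      push_cast
      push_cast at hqt
      linarith
    · set c' : ℝ → X := fun u => c (b + m - u) with hc'def
      have hc'm : c' m = c b := by unfold c'; norm_num
      have hc'b : c' b = c m := by
        unfold c'; congr 1; ring
      have hS₂' : IsGeodesicSegment S₂ (c' m) (c' b) := by rw [hc'm, hc'b]; exact hS₂
      have hmem : ∀ s, s ∈ Set.Icc m b → b + m - s ∈ Set.Icc a b := by
        intro s hs
        constructor
        · linarith [hs.2]
        · linarith [hs.1]
      have hlip' : ∀ s, s ∈ Set.Icc m b → ∀ t, t ∈ Set.Icc m b →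
          dist (c' s) (c' t) ≤ |s - t| := by
        intro s hs t ht
        have := hlip _ (hmem s hs) _ (hmem t ht)
        have habs : |b + m - s - (b + m - t)| = |s - t| := by
          rw [show b + m - s - (b + m - t) = -(s - t) by ring, abs_neg]
        unfold c'
        rw [← habs]
        exact this
      obtain ⟨t, ht, hqt⟩ := ih m b hmb (by linarith) c' hlip' S₂ hS₂' q hq
      refine ⟨b + m - t, hmem t ht, ?_⟩
      have hct : c' t = c (b + m - t) := rfl
      rw [hct] at hqt
      have := dist_triangle p q (c (b + m - t))
      push_cast
      push_cast at hqt
      linarith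

end LG6

namespace LG6
variable {X : Type*} [MetricSpace X]

lemma lemB (hG : GeodesicSpace X) (hδ : DeltaHyperbolic X 1)
    {lam eps : ℝ} (hlam : 0 < lam) (heps : 0 ≤ eps) (N : ℕ)
    (α : ℝ → X) (a b : ℝ) (hab : a ≤ b) (hT : b - a ≤ 2 ^ N)
    (hlip : ∀ s, s ∈ Set.Icc a b → ∀ t, t ∈ Set.Icc a b → dist (α s) (α t) ≤ |s - t|)
    (hlow : ∀ s, s ∈ Set.Icc a b → ∀ t, t ∈ Set.Icc a b →
      |s - t| ≤ lam * dist (α s) (α t) + eps) :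
    ∀ S : Set X, IsGeodesicSegment S (α a) (α b) →
    ∀ t, t ∈ Set.Icc a b →
    ∃ q ∈ S, dist (α t) q ≤ lam * (2 * (N + 1) + 1) + eps + (N + 1) := by
  intro S hS t ht
  obtain ⟨f, hf0, hfd, hiso, hSeq⟩ := hS
  have hS' : IsGeodesicSegment S (α a) (α b) := ⟨f, hf0, hfd, hiso, hSeq⟩
  set L := dist (α a) (α b) with hLdef
  have hL0 : 0 ≤ L := dist_nonneg
  have hmemS : ∀ u : ℝ, u ∈ Set.Icc (0:ℝ) L → f u ∈ S := by
    intro u hu; rw [hSeq]; exact ⟨u, hu, rfl⟩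
  have hminmem : ∀ j : ℕ, min (j:ℝ) L ∈ Set.Icc (0:ℝ) L :=
    fun j => ⟨le_min (Nat.cast_nonneg j) hL0, min_le_right _ _⟩
  have key : ∀ j : ℕ, ∃ t' ∈ Set.Icc a b, dist (f (min (j:ℝ) L)) (α t') ≤ (N:ℝ) + 1 ∧
      (j = 0 → t' = a) ∧ (j ≠ 0 → L ≤ (j:ℝ) → t' = b) := by
    intro j
    by_cases hj0 : j = 0
    · refine ⟨a, ⟨le_refl a, hab⟩, ?_, fun _ => rfl, fun h => absurd hj0 h⟩
      subst hj0
      have hmin : min ((0:ℕ):ℝ) L = 0 := by simp [hL0]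
      rw [hmin, hf0, dist_self]
      positivity
    · by_cases hjL : L ≤ (j:ℝ)
      · refine ⟨b, ⟨hab, le_refl b⟩, ?_, fun h => absurd h hj0, fun _ _ => rfl⟩
        have hmin : min ((j:ℕ):ℝ) L = L := min_eq_right hjL
        rw [hmin, hfd, dist_self]
        positivity
      · obtain ⟨t', ht', hd⟩ := lemA hG hδ N a b hab hT α hlip S hS' (f (min (j:ℝ) L))
          (hmemS _ (hminmem j))
        exact ⟨t', ht', hd, fun h => absurd h hj0, fun _ h => absurd h hjL⟩
  choose τ hτmem hτd hτ0 hτb using key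
  have hΔ0 : 0 ≤ lam * (2 * ((N:ℝ) + 1) + 1) + eps := by positivity
  have hstep : ∀ j : ℕ, |τ j - τ (j + 1)| ≤ lam * (2 * ((N:ℝ) + 1) + 1) + eps := by
    intro j
    have h1 : dist (f (min (j:ℝ) L)) (f (min ((j+1:ℕ):ℝ) L)) ≤ 1 := by
      rw [hiso _ (hminmem j) _ (hminmem (j+1))]
      rw [abs_le]
      have a1 : min ((j:ℕ):ℝ) L ≤ min ((j+1:ℕ):ℝ) L := by
        apply min_le_min _ (le_refl L); push_cast; linarith
      constructor
      · have a2 : min ((j+1:ℕ):ℝ) L ≤ min ((j:ℕ):ℝ) L + 1 := by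
          rcases le_total ((j:ℕ):ℝ) L with h | h
          · calc min ((j+1:ℕ):ℝ) L ≤ ((j+1:ℕ):ℝ) := min_le_left _ _
              _ = min ((j:ℕ):ℝ) L + 1 := by rw [min_eq_left h]; push_cast; ring
          · calc min ((j+1:ℕ):ℝ) L ≤ L := min_le_right _ _
              _ = min ((j:ℕ):ℝ) L := (min_eq_right h).symm
              _ ≤ min ((j:ℕ):ℝ) L + 1 := by linarith
        linarith
      · linarith
    have h2 : dist (α (τ j)) (α (τ (j + 1))) ≤ 2 * ((N:ℝ) + 1) + 1 := by
      have t1 := hτd j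
      have t2 := hτd (j + 1)
      have d1 := dist_triangle (α (τ j)) (f (min (j:ℝ) L)) (α (τ (j + 1)))
      have d2 := dist_triangle (f (min (j:ℝ) L)) (f (min ((j+1:ℕ):ℝ) L)) (α (τ (j + 1)))
      have c1 : dist (α (τ j)) (f (min (j:ℝ) L)) = dist (f (min (j:ℝ) L)) (α (τ j)) :=
        dist_comm _ _
      linarith
    have hl := hlow (τ j) (hτmem j) (τ (j + 1)) (hτmem (j + 1))
    have hmono : lam * dist (α (τ j)) (α (τ (j + 1))) ≤ lam * (2 * ((N:ℝ) + 1) + 1) :=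
      mul_le_mul_of_nonneg_left h2 hlam.le
    linarith
  by_cases htb : t = b
  · refine ⟨α b, ?_, ?_⟩
    · rw [hSeq]; exact ⟨L, ⟨hL0, le_refl L⟩, hfd⟩
    · rw [htb, dist_self]; positivity
  · have hex : ∃ j : ℕ, ¬ τ j ≤ t := by
      refine ⟨⌈L⌉₊ + 1, ?_⟩
      have hjb : τ (⌈L⌉₊ + 1) = b := hτb _ (by omega) (by push_cast; linarith [Nat.le_ceil L])
      rw [hjb]
      exact fun h => htb (le_antisymm ht.2 h)
    classical
    have hj₀ : ¬ τ (Nat.find hex) ≤ t := Nat.find_spec hex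
    have hne : Nat.find hex ≠ 0 := by
      intro h
      exact hj₀ (by rw [h, hτ0 0 rfl]; exact ht.1)
    have hprev : τ (Nat.find hex - 1) ≤ t :=
      not_not.mp (Nat.find_min hex (by omega))
    have hs := hstep (Nat.find hex - 1)
    rw [show Nat.find hex - 1 + 1 = Nat.find hex by omega] at hs
    have hj₀' : t < τ (Nat.find hex) := not_le.mp hj₀
    have habs : |t - τ (Nat.find hex)| ≤ lam * (2 * ((N:ℝ) + 1) + 1) + eps := by
      have h1 := (abs_le.mp hs).1
      rw [abs_le]
      constructor <;> [linarith; linarith]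
    refine ⟨f (min ((Nat.find hex : ℕ):ℝ) L), hmemS _ (hminmem _), ?_⟩
    have d1 := dist_triangle (α t) (α (τ (Nat.find hex))) (f (min ((Nat.find hex : ℕ):ℝ) L))
    have c1 : dist (α (τ (Nat.find hex))) (f (min ((Nat.find hex : ℕ):ℝ) L))
        = dist (f (min ((Nat.find hex : ℕ):ℝ) L)) (α (τ (Nat.find hex))) := dist_comm _ _
    have hl2 := hlip t ht (τ (Nat.find hex)) (hτmem _)
    have t3 := hτd (Nat.find hex)
    linarith
end LG6

namespace LG6

lemma exists_N (A : ℝ) (hA : 0 ≤ A) : ∃ N : ℕ, 1 ≤ N ∧ A * (N + 1) ≤ 2 ^ N / 2 := by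
  set K := ⌈2 * A⌉₊ with hK
  refine ⟨2 * K + 4, by omega, ?_⟩
  have h1 : K + 1 ≤ 2 ^ K := Nat.lt_two_pow_self (n := K)
  have hnat : K * (2 * K + 5) ≤ 2 ^ (2 * K + 4) := by
    calc K * (2 * K + 5) ≤ (K + 1) * (16 * (K + 1)) := by nlinarith
      _ ≤ 2 ^ K * (16 * 2 ^ K) := Nat.mul_le_mul h1 (Nat.mul_le_mul_left 16 h1)
      _ = 2 ^ (2 * K + 4) := by rw [two_mul, pow_add, pow_add]; ring
  have h2A : 2 * A ≤ (K : ℝ) := Nat.le_ceil _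
  have hcast : (K : ℝ) * (2 * K + 5) ≤ 2 ^ (2 * K + 4) := by exact_mod_cast hnat
  push_cast
  nlinarith [mul_le_mul_of_nonneg_right h2A (by positivity : (0:ℝ) ≤ 2 * K + 5)]

end LG6

set_option maxHeartbeats 2000000 in
/-- **Lemma 6(b).** For all `λ > 0` and `ε ≥ 0` there exist `T = T(λ,ε) > 0` and
`K = K(λ,ε) > 0` such that every `T`-local `(λ,ε)`-quasigeodesic in a `1`-hyperbolic
geodesic metric space is a `(K,K)`-quasigeodesic. -/
theorem local_to_global_quasigeodesic :
    ∀ lam eps : ℝ, 0 < lam → 0 ≤ eps →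
      ∃ T K : ℝ, 0 < T ∧ 0 < K ∧
        ∀ (X : Type*) [MetricSpace X], GeodesicSpace X → DeltaHyperbolic X 1 →
          ∀ (α : ℝ → X) (I : Set ℝ), I.OrdConnected →
            IsLocalQuasigeodesicOn α I T lam eps → IsQuasigeodesicOn α I K K := by
  intro lam eps hlam heps
  obtain ⟨N, hN1, hNA⟩ := LG6.exists_N (eps + 4 * lam * (3 * lam + eps + 1) + 13 * lam)
    (by positivity)
  set c : ℝ := lam * (2 * ((N:ℝ) + 1) + 1) + eps + ((N:ℝ) + 1) with hcdef
  have hc0 : 0 ≤ c := by positivity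
  set T : ℝ := 2 ^ N with hTdef
  have hT0 : (0:ℝ) < T := by positivity
  set h : ℝ := T / 2 with hhdef
  have hh0 : 0 < h := by positivity
  have hkey : eps + lam * (4 * (c + 3) + 1) ≤ h := by
    have hN0 : (0:ℝ) ≤ (N:ℝ) := Nat.cast_nonneg N
    have e2 : eps + lam * (4 * (c + 3) + 1) ≤
        (eps + 4 * lam * (3 * lam + eps + 1) + 13 * lam) * ((N:ℝ) + 1) := by
      rw [hcdef]
      nlinarith [mul_nonneg heps hN0, mul_nonneg (mul_nonneg hlam.le hlam.le) hN0,
        mul_nonneg (mul_nonneg hlam.le heps) hN0, mul_nonneg hlam.le hN0]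
    calc eps + lam * (4 * (c + 3) + 1) ≤ _ := e2
      _ ≤ 2 ^ N / 2 := hNA
      _ = h := by rw [hhdef, hTdef]
  set D : ℝ := (h - eps) / lam with hDdef
  have hD : 4 * (c + 3) + 1 ≤ D := by
    rw [hDdef, le_div_iff₀ hlam]
    nlinarith
  set D' : ℝ := D - 2 * (c + 3) with hD'def
  have hD'1 : 2 * (c + 3) + 1 ≤ D' := by rw [hD'def]; linarith
  have hD'0 : 0 < D' := by linarith
  have hp1 : (0:ℝ) ≤ h / D' := div_nonneg hh0.le hD'0.le
  have hp2 : (0:ℝ) ≤ h ^ 2 / D' := div_nonneg (pow_two_nonneg h) hD'0.le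
  refine ⟨T, lam + eps + h / D' + h ^ 2 / D' + h + 1, hT0, by linarith, ?_⟩
  set K : ℝ := lam + eps + h / D' + h ^ 2 / D' + h + 1 with hKdef
  have hKlam : lam ≤ K := by rw [hKdef]; linarith
  have hKeps : eps ≤ K := by rw [hKdef]; linarith
  clear_value K D' D h T c
  intro X _ hG hδ α I hI hloc
  obtain ⟨hlip, hlow⟩ := hloc
  refine ⟨hlip, ?_⟩
  have main : ∀ s ∈ I, ∀ t ∈ I, s ≤ t → t - s ≤ K * dist (α s) (α t) + K := by
    intro s hs t ht hst
    have hsub : Set.Icc s t ⊆ I := hI.out hs ht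
    have hd0 : 0 ≤ dist (α s) (α t) := dist_nonneg
    by_cases hcase : t - s ≤ T
    · have habs : |s - t| = t - s := by
        rw [abs_sub_comm]; exact abs_of_nonneg (by linarith)
      have hl := hlow s hs t ht (by rw [habs]; exact hcase)
      rw [habs] at hl
      nlinarith [mul_nonneg (sub_nonneg.mpr hKlam) hd0]
    · push_neg at hcase
      obtain ⟨n, hn1, hn2⟩ : ∃ n : ℕ, (n:ℝ) ≤ (t - s) / h ∧ (t - s) / h < (n:ℝ) + 1 :=
        ⟨⌊(t - s) / h⌋₊, Nat.floor_le (div_nonneg (by linarith) hh0.le),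
          Nat.lt_floor_add_one _⟩
      have hnh : (n:ℝ) * h ≤ t - s := (le_div_iff₀ hh0).mp hn1
      have hnh2 : t - s < ((n:ℝ) + 1) * h := (div_lt_iff₀ hh0).mp hn2
      have htiI : ∀ i : ℕ, i ≤ n → s + (i:ℝ) * h ∈ Set.Icc s t := by
        intro i hi
        have hin : (i:ℝ) ≤ (n:ℝ) := by exact_mod_cast hi
        have hp := mul_nonneg (Nat.cast_nonneg i : (0:ℝ) ≤ (i:ℝ)) hh0.le
        have hq := mul_le_mul_of_nonneg_right hin hh0.le
        exact ⟨by linarith, by linarith⟩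
      have hcons : ∀ i, i < n →
          D ≤ dist (α (s + (i:ℝ) * h)) (α (s + ((i + 1 : ℕ):ℝ) * h)) := by
        intro i hi
        have e1 : ((i + 1 : ℕ):ℝ) = (i:ℝ) + 1 := by push_cast; ring
        rw [e1]
        have hm1 : s + (i:ℝ) * h ∈ Set.Icc s t := htiI i (le_of_lt hi)
        have hm2 : s + ((i:ℝ) + 1) * h ∈ Set.Icc s t := by
          have h2 := htiI (i + 1) hi
          rw [e1] at h2; exact h2
        have habs : |s + (i:ℝ) * h - (s + ((i:ℝ) + 1) * h)| = h := by
          rw [show s + (i:ℝ) * h - (s + ((i:ℝ) + 1) * h) = -h by ring, abs_neg,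
            abs_of_nonneg hh0.le]
        have hl := hlow (s + (i:ℝ) * h) (hsub hm1) (s + ((i:ℝ) + 1) * h) (hsub hm2)
          (by rw [habs]; linarith)
        rw [habs] at hl
        rw [hDdef, div_le_iff₀ hlam]
        linarith [mul_comm lam (dist (α (s + (i:ℝ) * h)) (α (s + ((i:ℝ) + 1) * h)))]
      have hgp : ∀ i, i + 2 ≤ n →
          LG6.gp (α (s + (i:ℝ) * h)) (α (s + ((i + 2 : ℕ):ℝ) * h))
            (α (s + ((i + 1 : ℕ):ℝ) * h)) ≤ c := by
        intro i hi2
        have e1 : ((i + 1 : ℕ):ℝ) = (i:ℝ) + 1 := by push_cast; ring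
        have e2 : ((i + 2 : ℕ):ℝ) = (i:ℝ) + 2 := by push_cast; ring
        rw [e1, e2]
        have hab' : s + (i:ℝ) * h ≤ s + ((i:ℝ) + 2) * h := by nlinarith [hh0]
        have hba : s + ((i:ℝ) + 2) * h - (s + (i:ℝ) * h) = T := by rw [hhdef]; ring
        have hwsub : Set.Icc (s + (i:ℝ) * h) (s + ((i:ℝ) + 2) * h) ⊆ Set.Icc s t := by
          intro u hu
          have hin : ((i:ℝ) + 2) ≤ (n:ℝ) := by exact_mod_cast hi2
          constructor
          · have hh1 : s ≤ s + (i:ℝ) * h := by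
              linarith [mul_nonneg (Nat.cast_nonneg i : (0:ℝ) ≤ (i:ℝ)) hh0.le]
            linarith [hu.1]
          · have hh2 : s + ((i:ℝ) + 2) * h ≤ t := by
              linarith [mul_le_mul_of_nonneg_right hin hh0.le]
            linarith [hu.2]
        have hlip' : ∀ u, u ∈ Set.Icc (s + (i:ℝ) * h) (s + ((i:ℝ) + 2) * h) →
            ∀ v, v ∈ Set.Icc (s + (i:ℝ) * h) (s + ((i:ℝ) + 2) * h) →
            dist (α u) (α v) ≤ |u - v| :=
          fun u hu v hv => hlip u (hsub (hwsub hu)) v (hsub (hwsub hv))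
        have hlow' : ∀ u, u ∈ Set.Icc (s + (i:ℝ) * h) (s + ((i:ℝ) + 2) * h) →
            ∀ v, v ∈ Set.Icc (s + (i:ℝ) * h) (s + ((i:ℝ) + 2) * h) →
            |u - v| ≤ lam * dist (α u) (α v) + eps := by
          intro u hu v hv
          refine hlow u (hsub (hwsub hu)) v (hsub (hwsub hv)) ?_
          rw [← hba, abs_le]
          exact ⟨by linarith [hu.1, hv.2], by linarith [hu.2, hv.1]⟩
        obtain ⟨S, hS⟩ := hG (α (s + (i:ℝ) * h)) (α (s + ((i:ℝ) + 2) * h))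
        have hwin : s + ((i:ℝ) + 2) * h - (s + (i:ℝ) * h) ≤ 2 ^ N := by
          rw [hba, hTdef]
        have hmid : s + ((i:ℝ) + 1) * h ∈ Set.Icc (s + (i:ℝ) * h) (s + ((i:ℝ) + 2) * h) := by
          exact ⟨by linarith, by linarith⟩
        obtain ⟨q, hqS, hqd⟩ := LG6.lemB hG hδ hlam heps N α (s + (i:ℝ) * h)
          (s + ((i:ℝ) + 2) * h) hab' hwin hlip' hlow' S hS (s + ((i:ℝ) + 1) * h) hmid
        rw [← hcdef] at hqd
        have hadd := LG6.seg_add hS hqS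
        have d1 := dist_triangle (α (s + (i:ℝ) * h)) q (α (s + ((i:ℝ) + 1) * h))
        have d2 := dist_triangle (α (s + ((i:ℝ) + 2) * h)) q (α (s + ((i:ℝ) + 1) * h))
        have c1 : dist q (α (s + ((i:ℝ) + 1) * h)) = dist (α (s + ((i:ℝ) + 1) * h)) q :=
          dist_comm _ _
        have c2 : dist (α (s + ((i:ℝ) + 2) * h)) q = dist q (α (s + ((i:ℝ) + 2) * h)) :=
          dist_comm _ _
        have c3 : dist (α (s + (i:ℝ) * h)) (α (s + ((i:ℝ) + 1) * h))
            = dist (α (s + ((i:ℝ) + 1) * h)) (α (s + (i:ℝ) * h)) := dist_comm _ _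
        have c4 : dist (α (s + ((i:ℝ) + 2) * h)) (α (s + ((i:ℝ) + 1) * h))
            = dist (α (s + ((i:ℝ) + 1) * h)) (α (s + ((i:ℝ) + 2) * h)) := dist_comm _ _
        unfold LG6.gp
        linarith
      have hch := LG6.chain (LG6.four_point hG hδ) (fun i : ℕ => α (s + (i:ℝ) * h)) D c hc0
        (by linarith) n hcons hgp n (le_refl n)
      have hdist : (n:ℝ) * D' ≤ dist (α (s + ((0:ℕ):ℝ) * h)) (α (s + (n:ℝ) * h)) := by
        rw [hD'def]; exact hch.2
      have hx0 : s + ((0:ℕ):ℝ) * h = s := by norm_num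
      rw [hx0] at hdist
      have hend : dist (α (s + (n:ℝ) * h)) (α t) ≤ h := by
        have hm1 : s + (n:ℝ) * h ∈ Set.Icc s t := htiI n le_rfl
        have hl := hlip (s + (n:ℝ) * h) (hsub hm1) t (hsub ⟨hst, le_rfl⟩)
        have habs : |s + (n:ℝ) * h - t| ≤ h := by
          rw [abs_le]; constructor <;> [linarith; linarith]
        linarith
      have hd1 : (n:ℝ) * D' - h ≤ dist (α s) (α t) := by
        have d3 := dist_triangle (α s) (α t) (α (s + (n:ℝ) * h))
        have c5 : dist (α t) (α (s + (n:ℝ) * h)) = dist (α (s + (n:ℝ) * h)) (α t) :=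
          dist_comm _ _
        linarith
      have hsum : (n:ℝ) * D' ≤ dist (α s) (α t) + h := by linarith
      have hdiv1 : h / D' * D' = h := div_mul_cancel₀ h hD'0.ne'
      have hdiv2 : h ^ 2 / D' * D' = h ^ 2 := div_mul_cancel₀ _ hD'0.ne'
      have hKge1 : h / D' ≤ K := by rw [hKdef]; linarith
      have hKge2 : h ^ 2 / D' + h ≤ K := by rw [hKdef]; linarith
      have hKD' : h ≤ K * D' := by
        have h2 := mul_le_mul_of_nonneg_right hKge1 hD'0.le
        rw [hdiv1] at h2; exact h2
      have hKD'2 : h ^ 2 + h * D' ≤ K * D' := by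
        have h2 := mul_le_mul_of_nonneg_right hKge2 hD'0.le
        rw [add_mul, hdiv2] at h2; exact h2
      have hA1 : h * dist (α s) (α t) ≤ K * dist (α s) (α t) * D' := by
        linarith [mul_le_mul_of_nonneg_left hKD' hd0]
      have hm : (n:ℝ) * h * D' ≤ (dist (α s) (α t) + h) * h := by
        linarith [mul_le_mul_of_nonneg_right hsum hh0.le]
      have lhs : (t - s) * D' ≤ ((n:ℝ) + 1) * h * D' :=
        mul_le_mul_of_nonneg_right (le_of_lt hnh2) hD'0.le
      have final : (t - s) * D' ≤ (K * dist (α s) (α t) + K) * D' := by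
        linarith [lhs, hm, hA1, hKD'2]
      exact le_of_mul_le_mul_right final hD'0
  intro s hs t ht
  rcases le_total s t with h' | h'
  · have := main s hs t ht h'
    rw [abs_of_nonpos (by linarith : s - t ≤ 0)]
    linarith
  · have := main t ht s hs h'
    have hc : dist (α s) (α t) = dist (α t) (α s) := dist_comm _ _
    rw [abs_of_nonneg (by linarith : 0 ≤ s - t), hc]
    linarith
end

section
/- Let G be a group acting by isometries on a 1-hyperbolic geodesic metric space (X,d) with base point x ∈ X, and let g, h ∈ G. Then there exist a point r ∈ X and geodesic segments such that: the broken path w_g = [x,r] ∪ [r,gx] has length at most |g|_x + 2; the broken path w_h = [gx,r] ∪ [r,ghx] has length at most |h|_x + 2; the broken path w_{gh} = [x,r] ∪ [r,ghx] has length at most |gh|_x + 2; and each of w_g, w_h, w_{gh} lies in the 2-neighborhood of any geodesic segment joining its endpoints. -/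
set_option linter.unusedVariables false

section Lemma15Aux

open Set Metric

variable {X : Type*} [MetricSpace X]

private lemma geo_endpoint_left {s : Set X} {a b : X} (h : IsGeodesicSegment s a b) : a ∈ s := by
  obtain ⟨f, h0, hD, hiso, him⟩ := h
  rw [him]
  exact ⟨0, ⟨le_refl _, dist_nonneg⟩, h0⟩

private lemma geo_endpoint_right {s : Set X} {a b : X} (h : IsGeodesicSegment s a b) : b ∈ s := by
  obtain ⟨f, h0, hD, hiso, him⟩ := h
  rw [him]
  exact ⟨dist a b, ⟨dist_nonneg, le_refl _⟩, hD⟩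

private lemma geo_symm {s : Set X} {a b : X} (h : IsGeodesicSegment s a b) :
    IsGeodesicSegment s b a := by
  obtain ⟨f, h0, hD, hiso, him⟩ := h
  have hba : dist b a = dist a b := dist_comm b a
  refine ⟨fun t => f (dist a b - t), by simp [hD], ?_, ?_, ?_⟩
  · rw [hba]
    simp [h0]
  · intro t₁ ht₁ t₂ ht₂
    rw [hba] at ht₁ ht₂
    have h₁ : dist a b - t₁ ∈ Icc (0:ℝ) (dist a b) := ⟨by linarith [ht₁.2], by linarith [ht₁.1]⟩
    have h₂ : dist a b - t₂ ∈ Icc (0:ℝ) (dist a b) := ⟨by linarith [ht₂.2], by linarith [ht₂.1]⟩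
    rw [hiso _ h₁ _ h₂, show dist a b - t₁ - (dist a b - t₂) = -(t₁ - t₂) by ring, abs_neg]
  · rw [hba, him]
    ext p
    constructor
    · rintro ⟨t, ht, rfl⟩
      refine ⟨dist a b - t, ⟨by linarith [ht.2], by linarith [ht.1]⟩, ?_⟩
      simp
    · rintro ⟨t, ht, rfl⟩
      exact ⟨dist a b - t, ⟨by linarith [ht.2], by linarith [ht.1]⟩, rfl⟩

private lemma geo_init {a b : X} {f : ℝ → X}
    (h0 : f 0 = a)
    (hiso : ∀ t₁ ∈ Icc (0:ℝ) (dist a b), ∀ t₂ ∈ Icc (0:ℝ) (dist a b),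
      dist (f t₁) (f t₂) = |t₁ - t₂|)
    {τ : ℝ} (hτ : τ ∈ Icc (0:ℝ) (dist a b)) :
    IsGeodesicSegment (f '' Icc 0 τ) a (f τ) := by
  have h0m : (0:ℝ) ∈ Icc (0:ℝ) (dist a b) := ⟨le_refl _, dist_nonneg⟩
  have hd : dist a (f τ) = τ := by
    rw [← h0, hiso 0 h0m τ hτ, zero_sub, abs_neg, abs_of_nonneg hτ.1]
  refine ⟨f, h0, by rw [hd], ?_, by rw [hd]⟩
  intro t₁ ht₁ t₂ ht₂
  rw [hd] at ht₁ ht₂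
  exact hiso t₁ ⟨ht₁.1, le_trans ht₁.2 hτ.2⟩ t₂ ⟨ht₂.1, le_trans ht₂.2 hτ.2⟩

private lemma geo_tail {a b : X} {f : ℝ → X}
    (hD : f (dist a b) = b)
    (hiso : ∀ t₁ ∈ Icc (0:ℝ) (dist a b), ∀ t₂ ∈ Icc (0:ℝ) (dist a b),
      dist (f t₁) (f t₂) = |t₁ - t₂|)
    {τ : ℝ} (hτ : τ ∈ Icc (0:ℝ) (dist a b)) :
    IsGeodesicSegment (f '' Icc τ (dist a b)) (f τ) b := by
  have hDm : dist a b ∈ Icc (0:ℝ) (dist a b) := ⟨dist_nonneg, le_refl _⟩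
  have hd : dist (f τ) b = dist a b - τ := by
    have hcalc : dist (f τ) (f (dist a b)) = |τ - dist a b| := hiso τ hτ _ hDm
    rw [hD] at hcalc
    rw [hcalc, abs_of_nonpos (by linarith [hτ.2]), neg_sub]
  refine ⟨fun t => f (τ + t), by simp, ?_, ?_, ?_⟩
  · rw [hd]
    show f (τ + (dist a b - τ)) = b
    rw [show τ + (dist a b - τ) = dist a b by ring, hD]
  · intro t₁ ht₁ t₂ ht₂
    rw [hd] at ht₁ ht₂
    have h₁ : τ + t₁ ∈ Icc (0:ℝ) (dist a b) := ⟨by linarith [hτ.1, ht₁.1], by linarith [ht₁.2]⟩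
    have h₂ : τ + t₂ ∈ Icc (0:ℝ) (dist a b) := ⟨by linarith [hτ.1, ht₂.1], by linarith [ht₂.2]⟩
    show dist (f (τ + t₁)) (f (τ + t₂)) = |t₁ - t₂|
    rw [hiso _ h₁ _ h₂, show τ + t₁ - (τ + t₂) = t₁ - t₂ by ring]
  · rw [hd]
    ext p
    constructor
    · rintro ⟨t, ht, rfl⟩
      refine ⟨t - τ, ⟨by linarith [ht.1], by linarith [ht.2]⟩, ?_⟩
      simp
    · rintro ⟨t, ht, rfl⟩
      exact ⟨τ + t, ⟨by linarith [hτ.1, ht.1], by linarith [ht.2]⟩, rfl⟩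

private lemma geo_compact {s : Set X} {a b : X} (h : IsGeodesicSegment s a b) :
    IsCompact s := by
  obtain ⟨f, h0, hD, hiso, him⟩ := h
  rw [him]
  apply isCompact_Icc.image_of_continuousOn
  refine LipschitzOnWith.continuousOn (K := 1) ?_
  intro u hu v hv
  rw [edist_dist, edist_dist, hiso u hu v hv, Real.dist_eq]
  simp

private lemma geo_near {s : Set X} {a b : X} (h : IsGeodesicSegment s a b) (p : X) {c : ℝ}
    (hc : infDist p s ≤ c) : ∃ q ∈ s, dist p q ≤ c := by
  obtain ⟨q, hq, hq'⟩ := (geo_compact h).exists_infDist_eq_dist ⟨a, geo_endpoint_left h⟩ p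
  exact ⟨q, hq, hq' ▸ hc⟩

private lemma geo_add {s : Set X} {a b : X} (h : IsGeodesicSegment s a b) {q : X} (hq : q ∈ s) :
    dist a q + dist q b = dist a b := by
  obtain ⟨f, h0, hD, hiso, him⟩ := h
  rw [him] at hq
  obtain ⟨t, ht, rfl⟩ := hq
  have h0m : (0:ℝ) ∈ Icc (0:ℝ) (dist a b) := ⟨le_refl _, dist_nonneg⟩
  have hDm : dist a b ∈ Icc (0:ℝ) (dist a b) := ⟨dist_nonneg, le_refl _⟩
  have h1 : dist a (f t) = t := by
    rw [← h0, hiso 0 h0m t ht, zero_sub, abs_neg, abs_of_nonneg ht.1]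
  have h2 : dist (f t) b = dist a b - t := by
    have hcalc : dist (f t) (f (dist a b)) = |t - dist a b| := hiso t ht _ hDm
    rw [hD] at hcalc
    rw [hcalc, abs_of_nonpos (by linarith [ht.2]), neg_sub]
  rw [h1, h2]
  ring

private lemma geo_close (hhyp : DeltaHyperbolic X 1) {S₁ S₂ : Set X} {a b : X}
    (h₁ : IsGeodesicSegment S₁ a b) (h₂ : IsGeodesicSegment S₂ a b) :
    ∀ p ∈ S₁, ∃ q ∈ S₂, dist p q ≤ 1 := by
  have hpt : IsGeodesicSegment ({b} : Set X) b b := by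
    refine ⟨fun _ => b, rfl, rfl, ?_, ?_⟩
    · intro t₁ ht₁ t₂ ht₂
      simp only [dist_self, mem_Icc] at ht₁ ht₂
      have e₁ : t₁ = 0 := le_antisymm ht₁.2 ht₁.1
      have e₂ : t₂ = 0 := le_antisymm ht₂.2 ht₂.1
      show dist b b = |t₁ - t₂|
      rw [dist_self, e₁, e₂]
      simp
    · rw [dist_self, Icc_self]
      simp
  intro p hp
  obtain ⟨q, hq, hd⟩ := hhyp a b b S₁ S₂ {b} h₁ h₂ hpt p hp
  rcases hq with hq | hq
  · exact ⟨q, hq, hd⟩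
  · rw [mem_singleton_iff] at hq
    exact ⟨b, geo_endpoint_right h₂, hq ▸ hd⟩

private lemma geo_mono (hhyp : DeltaHyperbolic X 1) (hgeo : GeodesicSpace X)
    {A B C : X} {lam S : Set X}
    (hl : IsGeodesicSegment lam A B) (hS : IsGeodesicSegment S A C)
    {ws : X} (hws : ws ∈ S) (hB : dist B ws ≤ 1) :
    ∀ p ∈ lam, ∃ q ∈ S, dist p q ≤ 2 := by
  obtain ⟨gf, hg0, hgD, hgiso, hgim⟩ := hS
  have hws' := hws
  rw [hgim] at hws'
  obtain ⟨τ, hτ, hτw⟩ := hws'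
  have hSinit : IsGeodesicSegment (gf '' Icc 0 τ) A ws := by
    have hh := geo_init hg0 hgiso hτ
    rwa [hτw] at hh
  obtain ⟨β, hβ⟩ := hgeo B ws
  have hβclose : ∀ ξ ∈ β, dist ξ ws ≤ 1 := by
    obtain ⟨fb, hb0, hbD, hbiso, hbim⟩ := hβ
    intro ξ hξ
    rw [hbim] at hξ
    obtain ⟨t, ht, rfl⟩ := hξ
    have hDm : dist B ws ∈ Icc (0:ℝ) (dist B ws) := ⟨dist_nonneg, le_refl _⟩
    have hcalc : dist (fb t) (fb (dist B ws)) = |t - dist B ws| := hbiso t ht _ hDm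
    rw [hbD] at hcalc
    rw [hcalc, abs_of_nonpos (by linarith [ht.2]), neg_sub]
    linarith [ht.1, hB]
  intro p hp
  obtain ⟨q, hq, hd⟩ := hhyp A B ws lam (gf '' Icc 0 τ) β hl hSinit hβ p hp
  rcases hq with hq | hq
  · refine ⟨q, ?_, by linarith⟩
    rw [hgim]
    exact image_mono (f := gf) (Icc_subset_Icc (le_refl 0) hτ.2) hq
  · refine ⟨ws, hws, ?_⟩
    calc dist p ws ≤ dist p q + dist q ws := dist_triangle _ _ _
      _ ≤ 1 + 1 := add_le_add hd (hβclose q hq)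
      _ ≤ 2 := by norm_num

end Lemma15Aux
/-- **Lemma 15.** For `g, h ∈ G` acting by isometries on a `1`-hyperbolic geodesic
space with base point `x`, there are a point `r` and geodesic segments
`s₁ = [x,r]`, `s₂ = [r,gx]`, `s₃ = [r,ghx]` such that the broken paths
`w_g = [x,r] ∪ [r,gx]`, `w_h = [gx,r] ∪ [r,ghx]`, `w_{gh} = [x,r] ∪ [r,ghx]` have
lengths at most `|g|_x + 2`, `|h|_x + 2`, `|gh|_x + 2` respectively, and each lies in
the `2`-neighborhood of any geodesic segment joining its endpoints. -/
theorem lemma15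
    (G : Type*) [Group G] (X : Type*) [MetricSpace X] [MulAction G X]
    (hgeo : GeodesicSpace X) (hhyp : DeltaHyperbolic X 1)
    (hiso : ∀ (g : G) (a b : X), dist (g • a) (g • b) = dist a b)
    (x : X) (g h : G) :
    ∃ (r : X) (sxr srg srgh : Set X), Lemma15Data x g h r sxr srg srgh := by
  classical
  obtain ⟨Γ, hΓ⟩ := hgeo (g • x) ((g * h) • x)
  obtain ⟨k, hk0, hkL, hkiso, hkim⟩ := hΓ
  have hΓ' : IsGeodesicSegment Γ (g • x) ((g * h) • x) := ⟨k, hk0, hkL, hkiso, hkim⟩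
  set L := dist (g • x) ((g * h) • x) with hLdef
  -- the set of parameters whose point is within 1 of every geodesic [x, gx]
  set W : Set ℝ := {w | w ∈ Set.Icc (0:ℝ) L ∧
      ∀ S : Set X, IsGeodesicSegment S x (g • x) → ∃ q ∈ S, dist (k w) q ≤ 1} with hWdef
  have h0W : (0:ℝ) ∈ W := by
    refine ⟨⟨le_refl _, dist_nonneg⟩, fun S hS => ⟨g • x, geo_endpoint_right hS, ?_⟩⟩
    rw [hk0, dist_self]
    norm_num
  have hWbdd : BddAbove W := ⟨L, fun w hw => hw.1.2⟩
  set w₁ := sSup W with hw₁def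
  have hw₁0 : 0 ≤ w₁ := le_csSup hWbdd h0W
  have hw₁L : w₁ ≤ L := csSup_le ⟨0, h0W⟩ (fun w hw => hw.1.2)
  have hw₁Icc : w₁ ∈ Set.Icc (0:ℝ) L := ⟨hw₁0, hw₁L⟩
  -- r := k w₁ is within 1 of every geodesic from x to g•x
  have Fab : ∀ S : Set X, IsGeodesicSegment S x (g • x) → ∃ q ∈ S, dist (k w₁) q ≤ 1 := by
    intro S hS
    apply geo_near hS
    apply le_of_forall_pos_le_add
    intro ε hε
    have hlt : w₁ - ε < sSup W := by rw [← hw₁def]; linarith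
    obtain ⟨w, hwW, hwgt⟩ := exists_lt_of_lt_csSup ⟨0, h0W⟩ hlt
    have hwle : w ≤ w₁ := by rw [hw₁def]; exact le_csSup hWbdd hwW
    obtain ⟨q, hqS, hqd⟩ := hwW.2 S hS
    have hdist : dist (k w₁) (k w) = w₁ - w := by
      rw [hkiso w₁ hw₁Icc w hwW.1, abs_of_nonneg (by linarith)]
    calc Metric.infDist (k w₁) S ≤ dist (k w₁) q := Metric.infDist_le_dist_of_mem hqS
      _ ≤ dist (k w₁) (k w) + dist (k w) q := dist_triangle _ _ _
      _ ≤ 1 + ε := by rw [hdist]; linarith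
  -- r is within 1 of every geodesic from x to (g*h)•x
  have Fac : ∀ S : Set X, IsGeodesicSegment S x ((g * h) • x) → ∃ q ∈ S, dist (k w₁) q ≤ 1 := by
    intro S hS
    rcases eq_or_lt_of_le hw₁L with hEq | hLt
    · refine ⟨(g * h) • x, geo_endpoint_right hS, ?_⟩
      rw [hEq, hkL, dist_self]
      norm_num
    · apply geo_near hS
      apply le_of_forall_pos_le_add
      intro ε hε
      set w := min L (w₁ + ε) with hwdef
      have hwgt : w₁ < w := lt_min hLt (by linarith)
      have hwIcc : w ∈ Set.Icc (0:ℝ) L := ⟨le_trans hw₁0 (le_of_lt hwgt), min_le_left _ _⟩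
      have hwnotW : w ∉ W := by
        intro hmem
        have hle : w ≤ sSup W := le_csSup hWbdd hmem
        rw [← hw₁def] at hle
        linarith
      have hfail : ∃ Sab : Set X, IsGeodesicSegment Sab x (g • x) ∧
          ∀ q ∈ Sab, ¬ (dist (k w) q ≤ 1) := by
        by_contra hcon
        push_neg at hcon
        exact hwnotW ⟨hwIcc, fun S' hS' => hcon S' hS'⟩
      obtain ⟨Sab, hSab, hSabFar⟩ := hfail
      have hthin := hhyp (g • x) ((g * h) • x) x Γ Sab S hΓ' (geo_symm hSab) (geo_symm hS)
      have hkwΓ : k w ∈ Γ := by rw [hkim]; exact ⟨w, hwIcc, rfl⟩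
      obtain ⟨q, hq, hqd⟩ := hthin (k w) hkwΓ
      rcases hq with hq | hq
      · exact absurd hqd (hSabFar q hq)
      · have hdist : dist (k w₁) (k w) = w - w₁ := by
          rw [hkiso w₁ hw₁Icc w hwIcc, abs_of_nonpos (by linarith), neg_sub]
        calc Metric.infDist (k w₁) S ≤ dist (k w₁) q := Metric.infDist_le_dist_of_mem hq
          _ ≤ dist (k w₁) (k w) + dist (k w) q := dist_triangle _ _ _
          _ ≤ 1 + ε := by
              rw [hdist]
              have hm : w ≤ w₁ + ε := min_le_right _ _
              linarith
  -- the two subsegments of Γ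
  have hS1 : IsGeodesicSegment (k '' Set.Icc 0 w₁) (g • x) (k w₁) := geo_init hk0 hkiso hw₁Icc
  have hS2 : IsGeodesicSegment (k '' Set.Icc w₁ L) (k w₁) ((g * h) • x) :=
    geo_tail hkL hkiso hw₁Icc
  have hsub1 : k '' Set.Icc 0 w₁ ⊆ Γ := by
    rw [hkim]; exact Set.image_mono (f := k) (Set.Icc_subset_Icc (le_refl _) hw₁L)
  have hsub2 : k '' Set.Icc w₁ L ⊆ Γ := by
    rw [hkim]; exact Set.image_mono (f := k) (Set.Icc_subset_Icc hw₁0 (le_refl _))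
  obtain ⟨sxr, hsxr⟩ := hgeo x (k w₁)
  have e1 : dist (g • x) (k w₁) = w₁ := by
    have hh := hkiso 0 ⟨le_refl _, dist_nonneg⟩ w₁ hw₁Icc
    rw [hk0] at hh
    rw [hh, zero_sub, abs_neg, abs_of_nonneg hw₁0]
  have e2 : dist (k w₁) ((g * h) • x) = L - w₁ := by
    have hh := hkiso w₁ hw₁Icc L ⟨dist_nonneg, le_refl _⟩
    rw [hkL] at hh
    rw [hh, abs_of_nonpos (by linarith), neg_sub]
  refine ⟨k w₁, sxr, k '' Set.Icc 0 w₁, k '' Set.Icc w₁ L, ?_⟩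
  unfold Lemma15Data
  refine ⟨hsxr, geo_symm hS1, hS2, ?_, ?_, ?_, ?_, ?_, ?_⟩
  · -- length of w_g
    obtain ⟨Sab0, hSab0⟩ := hgeo x (g • x)
    obtain ⟨q, hq, hqd⟩ := Fab Sab0 hSab0
    have hadd := geo_add hSab0 hq
    have h1 : dist x (k w₁) ≤ dist x q + dist q (k w₁) := dist_triangle _ _ _
    have h2 : dist (k w₁) (g • x) ≤ dist (k w₁) q + dist q (g • x) := dist_triangle _ _ _
    have h3 : dist q (k w₁) = dist (k w₁) q := dist_comm _ _
    linarith
  · -- length of w_h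
    have e3 : L = dist x (h • x) := by
      rw [hLdef, mul_smul]
      exact hiso g x (h • x)
    rw [e1, e2]
    linarith
  · -- length of w_gh
    obtain ⟨Sac0, hSac0⟩ := hgeo x ((g * h) • x)
    obtain ⟨q, hq, hqd⟩ := Fac Sac0 hSac0
    have hadd := geo_add hSac0 hq
    have h1 : dist x (k w₁) ≤ dist x q + dist q (k w₁) := dist_triangle _ _ _
    have h2 : dist (k w₁) ((g * h) • x) ≤ dist (k w₁) q + dist q ((g * h) • x) :=
      dist_triangle _ _ _
    have h3 : dist q (k w₁) = dist (k w₁) q := dist_comm _ _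
    linarith
  · -- w_g in the 2-neighborhood of any [x, gx]
    intro S hS
    obtain ⟨q, hq, hqd⟩ := Fab S hS
    intro p hp
    rcases hp with hp | hp
    · exact geo_mono hhyp hgeo hsxr hS hq hqd p hp
    · exact geo_mono hhyp hgeo hS1 (geo_symm hS) hq hqd p hp
  · -- w_h in the 2-neighborhood of any [gx, ghx]
    intro S hS
    intro p hp
    have hpΓ : p ∈ Γ := by
      rcases hp with hp | hp
      · exact hsub1 hp
      · exact hsub2 hp
    obtain ⟨q, hq, hqd⟩ := geo_close hhyp hΓ' hS p hpΓ
    exact ⟨q, hq, le_trans hqd one_le_two⟩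
  · -- w_gh in the 2-neighborhood of any [x, ghx]
    intro S hS
    obtain ⟨q, hq, hqd⟩ := Fac S hS
    intro p hp
    rcases hp with hp | hp
    · exact geo_mono hhyp hgeo hsxr hS hq hqd p hp
    · exact geo_mono hhyp hgeo (geo_symm hS2) (geo_symm hS) hq hqd p hp
end

section
/- Let G be a group acting by isometries on a 1-hyperbolic geodesic metric space (X,d) with base point x ∈ X, and let g, h, f ∈ G. Then one of the following occurs. (1) There exist points p, q ∈ X and geodesic segments such that the path w_g = [x,p] ∪ [p,gx] has length at most |g|_x + 4, the path w_h = [gx,p] ∪ [p,q] ∪ [q,ghx] has length at most |h|_x + 4, the path w_f = [ghx,q] ∪ [q,ghfx] has length at most |f|_x + 4, and the path w_{ghf} = [x,p] ∪ [p,q] ∪ [q,ghfx] has length at most |ghf|_x + 4. (2) There exist points p, q ∈ X and geodesic segments such that the path w_g = [x,p] ∪ [p,q] ∪ [q,gx] has length at most |g|_x + 4, the path w_h = [gx,q] ∪ [q,ghx] has length at most |h|_x + 4, the path w_f = [ghx,q] ∪ [q,p] ∪ [p,ghfx] has length at most |f|_x + 4, the path w_{ghf} = [x,p] ∪ [p,ghfx]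 has length at most |ghf|_x + 4, the segment [p,q] lies in the 4-neighborhood of any geodesic segment [x,gx] and of any geodesic segment [ghx,ghfx], and the 5-neighborhood of [p,q] contains a subsegment of [x,gx] and a subsegment of gh[x,fx], each of length at least d(p,q). In both cases each of the paths w_g, w_h, w_f, w_{ghf} lies in the 4-neighborhood of any geodesic segment joining its endpoints; moreover p, q can be chosen so that for any point r as in Lemma 15 applied to the pair g, h (a point r with [x,r] ∪ [r,gx] of length ≤ |g|_x + 2, [gx,r] ∪ [r,ghx] of length ≤ |h|_x + 2 and [x,r] ∪ [r,ghx] of length ≤ |gh|_x + 2, each lying in the 2-neighborhood of geodesics joining its endpoints), in case (1): [x,r] lies in the 5-neighborhood of [x,p], [r,gx] lies in the 5-neighborhood of [p,gx], and [r,ghx] lies in the 5-neighborhood of [p,q] ∪ [q,ghx]; and in case (2): [x,r] lies in the 5-neighborhood of [x,p] ∪ [p,q], [r,gx] lies in the 5-neighborhood of [q,gx], and [r,ghx] lies in the 5-neighborhood of [q,ghx]. -/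
set_option linter.unusedVariables false
set_option maxHeartbeats 1000000

namespace L16
variable {X : Type*} [MetricSpace X]

lemma geo_rev {s : Set X} {a b : X} (h : IsGeodesicSegment s a b) :
    IsGeodesicSegment s b a := by
  obtain ⟨f, h0, hL, hi, hs⟩ := h
  have hd : dist b a = dist a b := dist_comm b a
  refine ⟨fun t => f (dist a b - t), by simp [hd, hL], by simp [hd, h0], ?_, ?_⟩
  · intro t₁ ht₁ t₂ ht₂
    rw [hd] at ht₁ ht₂
    have h1 : dist a b - t₁ ∈ Set.Icc (0:ℝ) (dist a b) := by
      constructor <;> [linarith [ht₁.2]; linarith [ht₁.1]]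
    have h2 : dist a b - t₂ ∈ Set.Icc (0:ℝ) (dist a b) := by
      constructor <;> [linarith [ht₂.2]; linarith [ht₂.1]]
    rw [hi _ h1 _ h2]
    rw [abs_sub_comm]; ring_nf
  · rw [hs, hd]
    ext y
    simp only [Set.mem_image]
    constructor
    · rintro ⟨t, ht, rfl⟩
      exact ⟨dist a b - t, ⟨by linarith [ht.2], by linarith [ht.1]⟩, by ring_nf⟩
    · rintro ⟨t, ht, rfl⟩
      exact ⟨dist a b - t, ⟨by linarith [ht.2], by linarith [ht.1]⟩, by ring_nf⟩

lemma geo_left_mem {s : Set X} {a b : X} (h : IsGeodesicSegment s a b) : a ∈ s := by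
  obtain ⟨f, h0, hL, hi, hs⟩ := h
  rw [hs]; exact ⟨0, ⟨le_refl _, dist_nonneg⟩, h0⟩

lemma geo_right_mem {s : Set X} {a b : X} (h : IsGeodesicSegment s a b) : b ∈ s := by
  obtain ⟨f, h0, hL, hi, hs⟩ := h
  rw [hs]; exact ⟨dist a b, ⟨dist_nonneg, le_refl _⟩, hL⟩

lemma geo_sub {a b : X} {f : ℝ → X} (h0 : f 0 = a) (hL : f (dist a b) = b)
    (hi : ∀ t₁ ∈ Set.Icc (0 : ℝ) (dist a b), ∀ t₂ ∈ Set.Icc (0 : ℝ) (dist a b),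
      dist (f t₁) (f t₂) = |t₁ - t₂|) {u v : ℝ} (hu : 0 ≤ u) (huv : u ≤ v)
    (hv : v ≤ dist a b) :
    IsGeodesicSegment (f '' Set.Icc u v) (f u) (f v) := by
  have hum : u ∈ Set.Icc (0:ℝ) (dist a b) := ⟨hu, le_trans huv hv⟩
  have hvm : v ∈ Set.Icc (0:ℝ) (dist a b) := ⟨le_trans hu huv, hv⟩
  have hd : dist (f u) (f v) = v - u := by
    rw [hi u hum v hvm, abs_of_nonpos (by linarith : u - v ≤ 0)]; ring
  refine ⟨fun t => f (u + t), by simp, by rw [hd]; ring_nf, ?_, ?_⟩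
  · intro t₁ ht₁ t₂ ht₂
    rw [hd] at ht₁ ht₂
    have m1 : u + t₁ ∈ Set.Icc (0:ℝ) (dist a b) := ⟨by linarith [ht₁.1], by linarith [ht₁.2]⟩
    have m2 : u + t₂ ∈ Set.Icc (0:ℝ) (dist a b) := ⟨by linarith [ht₂.1], by linarith [ht₂.2]⟩
    rw [hi _ m1 _ m2]
    congr 1; ring
  · rw [hd]
    ext y
    simp only [Set.mem_image]
    constructor
    · rintro ⟨t, ht, rfl⟩
      exact ⟨t - u, ⟨by linarith [ht.1], by linarith [ht.2]⟩, by ring_nf⟩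
    · rintro ⟨t, ht, rfl⟩
      exact ⟨u + t, ⟨by linarith [ht.1], by linarith [ht.2]⟩, rfl⟩

lemma param_dist_left {a b : X} {f : ℝ → X} (h0 : f 0 = a)
    (hi : ∀ t₁ ∈ Set.Icc (0 : ℝ) (dist a b), ∀ t₂ ∈ Set.Icc (0 : ℝ) (dist a b),
      dist (f t₁) (f t₂) = |t₁ - t₂|) {t : ℝ} (ht : t ∈ Set.Icc (0:ℝ) (dist a b)) :
    dist a (f t) = t := by
  have := hi 0 ⟨le_refl _, dist_nonneg⟩ t ht
  rw [h0] at this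
  rw [this, abs_sub_comm, abs_of_nonneg (by linarith [ht.1] : (0:ℝ) ≤ t - 0)]
  ring

lemma param_dist_right {a b : X} {f : ℝ → X} (hL : f (dist a b) = b)
    (hi : ∀ t₁ ∈ Set.Icc (0 : ℝ) (dist a b), ∀ t₂ ∈ Set.Icc (0 : ℝ) (dist a b),
      dist (f t₁) (f t₂) = |t₁ - t₂|) {t : ℝ} (ht : t ∈ Set.Icc (0:ℝ) (dist a b)) :
    dist (f t) b = dist a b - t := by
  have := hi t ht (dist a b) ⟨dist_nonneg, le_refl _⟩
  rw [hL] at this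
  rw [this, abs_of_nonpos (by linarith [ht.2] : t - dist a b ≤ 0)]
  ring



lemma geo_mem_dist {s : Set X} {a b : X} (h : IsGeodesicSegment s a b) {c : X} (hc : c ∈ s) :
    dist a c + dist c b = dist a b := by
  obtain ⟨f, h0, hL, hi, hs⟩ := h
  rw [hs] at hc
  obtain ⟨t, ht, rfl⟩ := hc
  rw [param_dist_left h0 hi ht, param_dist_right hL hi ht]
  ring

lemma geo_compact {s : Set X} {a b : X} (h : IsGeodesicSegment s a b) : IsCompact s := by
  obtain ⟨f, h0, hL, hi, hs⟩ := h
  rw [hs]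
  apply isCompact_Icc.image_of_continuousOn
  intro t ht
  apply Metric.continuousWithinAt_iff.2
  intro ε hε
  exact ⟨ε, hε, fun {t'} ht' hd => by
    rw [hi t' ht' t ht]
    rwa [Real.dist_eq] at hd⟩

lemma taut_near (hgeo : GeodesicSpace X) (hhyp : DeltaHyperbolic X 1)
    {u v : X} {f : ℝ → X} (h0 : f 0 = u) (hL : f (dist u v) = v)
    (hi : ∀ t₁ ∈ Set.Icc (0 : ℝ) (dist u v), ∀ t₂ ∈ Set.Icc (0 : ℝ) (dist u v),
      dist (f t₁) (f t₂) = |t₁ - t₂|) (c : X) :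
    ∃ s ∈ Set.Icc (0:ℝ) (dist u v),
      dist c (f s) ≤ dist u c - s + 2 ∧ dist c (f s) ≤ dist c v - (dist u v - s) + 2 := by
  obtain ⟨s1, hs1⟩ := hgeo u c
  obtain ⟨s2, hs2⟩ := hgeo v c
  have hS : IsGeodesicSegment (f '' Set.Icc (0:ℝ) (dist u v)) u v := ⟨f, h0, hL, hi, rfl⟩
  have hthin := hhyp u v c _ s1 s2 hS hs1 hs2
  have hc1 : IsCompact s1 := geo_compact hs1
  have hc2 : IsCompact s2 := geo_compact hs2
  have hn1 : s1.Nonempty := ⟨u, by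
    obtain ⟨g, hg0, _, _, hgs⟩ := hs1
    rw [hgs]; exact ⟨0, ⟨le_refl _, dist_nonneg⟩, hg0⟩⟩
  have hn2 : s2.Nonempty := ⟨v, by
    obtain ⟨g, hg0, _, _, hgs⟩ := hs2
    rw [hgs]; exact ⟨0, ⟨le_refl _, dist_nonneg⟩, hg0⟩⟩
  set L := dist u v with hLdef
  have hL0 : 0 ≤ L := dist_nonneg
  set T1 : Set ℝ := {t | t ∈ Set.Icc (0:ℝ) L ∧ ∃ e ∈ s1, dist (f t) e ≤ 1} with hT1
  have h0T : (0:ℝ) ∈ T1 := by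
    refine ⟨⟨le_refl _, hL0⟩, u, ?_, by rw [h0]; simp⟩
    obtain ⟨g, hg0, _, _, hgs⟩ := hs1
    rw [hgs]; exact ⟨0, ⟨le_refl _, dist_nonneg⟩, hg0⟩
  have hbdd : BddAbove T1 := ⟨L, fun t ht => ht.1.2⟩
  set σ := sSup T1 with hσ
  have hσmem : σ ∈ Set.Icc (0:ℝ) L :=
    ⟨le_csSup hbdd h0T, csSup_le ⟨0, h0T⟩ (fun t ht => ht.1.2)⟩
  -- σ is within 1 of s1
  have hinf1 : Metric.infDist (f σ) s1 ≤ 1 := by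
    refine le_of_forall_pos_le_add (fun ε hε => ?_)
    obtain ⟨t, htT, htσ⟩ := exists_lt_of_lt_csSup ⟨0, h0T⟩ (by linarith : σ - ε < σ)
    have htle : t ≤ σ := le_csSup hbdd htT
    obtain ⟨hticc, e, he, hde⟩ := htT
    have hdist : dist (f σ) (f t) = |σ - t| := hi σ hσmem t hticc
    calc Metric.infDist (f σ) s1 ≤ dist (f σ) e := Metric.infDist_le_dist_of_mem he
      _ ≤ dist (f σ) (f t) + dist (f t) e := dist_triangle _ _ _
      _ ≤ |σ - t| + 1 := by rw [hdist]; linarith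
      _ ≤ 1 + ε := by rw [abs_of_nonneg (by linarith)]; linarith
  obtain ⟨e1, he1, hde1⟩ := hc1.exists_infDist_eq_dist hn1 (f σ)
  have hde1' : dist (f σ) e1 ≤ 1 := by rw [← hde1]; exact hinf1
  -- σ is within 1 of s2
  have hinf2 : ∃ e2 ∈ s2, dist (f σ) e2 ≤ 1 := by
    rcases eq_or_lt_of_le hσmem.2 with heq | hlt
    · refine ⟨v, ?_, ?_⟩
      · obtain ⟨g, hg0, _, _, hgs⟩ := hs2
        rw [hgs]; exact ⟨0, ⟨le_refl _, dist_nonneg⟩, hg0⟩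
      · rw [heq, hL]; simp
    · have hinf : Metric.infDist (f σ) s2 ≤ 1 := by
        refine le_of_forall_pos_le_add (fun ε hε => ?_)
        set t := min (σ + ε) L with htdef
        have htσ : σ < t := lt_min (by linarith) hlt
        have hticc : t ∈ Set.Icc (0:ℝ) L := ⟨le_trans hσmem.1 (le_of_lt htσ), min_le_right _ _⟩
        have htnT1 : t ∉ T1 := fun hmem => absurd (le_csSup hbdd hmem) (not_le.2 htσ)
        obtain ⟨e, he, hde⟩ := hthin (f t) ⟨t, hticc, rfl⟩
        rcases he with he | he
        · exact absurd ⟨hticc, e, he, hde⟩ htnT1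
        · have hdist : dist (f σ) (f t) = |σ - t| := hi σ hσmem t hticc
          calc Metric.infDist (f σ) s2 ≤ dist (f σ) e := Metric.infDist_le_dist_of_mem he
            _ ≤ dist (f σ) (f t) + dist (f t) e := dist_triangle _ _ _
            _ ≤ |σ - t| + 1 := by rw [hdist]; linarith
            _ ≤ 1 + ε := by
                rw [abs_of_nonpos (by linarith)]
                have : t ≤ σ + ε := min_le_left _ _
                linarith
      obtain ⟨e2, he2, hde2⟩ := hc2.exists_infDist_eq_dist hn2 (f σ)
      exact ⟨e2, he2, by rw [← hde2]; exact hinf⟩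
  obtain ⟨e2, he2, hde2'⟩ := hinf2
  refine ⟨σ, hσmem, ?_, ?_⟩
  · -- via e1 on [u,c]
    have hsum : dist u e1 + dist e1 c = dist u c := by
      obtain ⟨g, hg0, hgL, hgi, hgs⟩ := hs1
      rw [hgs] at he1
      obtain ⟨t, ht, rfl⟩ := he1
      rw [param_dist_left hg0 hgi ht, param_dist_right hgL hgi ht]; ring
    have h1 : dist u e1 ≥ σ - 1 := by
      have h2 : dist u (f σ) ≤ dist u e1 + dist e1 (f σ) := dist_triangle _ _ _
      rw [param_dist_left h0 hi hσmem] at h2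
      rw [dist_comm e1 (f σ)] at h2
      linarith
    calc dist c (f σ) ≤ dist c e1 + dist e1 (f σ) := dist_triangle _ _ _
      _ ≤ dist c e1 + 1 := by rw [dist_comm e1 (f σ)]; linarith
      _ = dist u c - dist u e1 + 1 := by rw [dist_comm c e1]; linarith
      _ ≤ dist u c - σ + 2 := by linarith
  · have hsum : dist v e2 + dist e2 c = dist v c := by
      obtain ⟨g, hg0, hgL, hgi, hgs⟩ := hs2
      rw [hgs] at he2
      obtain ⟨t, ht, rfl⟩ := he2
      rw [param_dist_left hg0 hgi ht, param_dist_right hgL hgi ht]; ring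
    have h1 : dist v e2 ≥ (L - σ) - 1 := by
      have h2 : dist v (f σ) ≤ dist v e2 + dist e2 (f σ) := dist_triangle _ _ _
      rw [dist_comm v (f σ), param_dist_right hL hi hσmem] at h2
      rw [dist_comm e2 (f σ)] at h2
      linarith
    have hcv : dist v c = dist c v := dist_comm _ _
    calc dist c (f σ) ≤ dist c e2 + dist e2 (f σ) := dist_triangle _ _ _
      _ ≤ dist c e2 + 1 := by rw [dist_comm e2 (f σ)]; linarith
      _ = dist v c - dist v e2 + 1 := by rw [dist_comm c e2]; linarith
      _ ≤ dist c v - (L - σ) + 2 := by linarith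

lemma taut_near_set (hgeo : GeodesicSpace X) (hhyp : DeltaHyperbolic X 1)
    {u v : X} {S : Set X} (hS : IsGeodesicSegment S u v) {c : X} {K : ℝ}
    (htaut : dist u c + dist c v ≤ dist u v + K) :
    ∃ m ∈ S, dist c m ≤ K / 2 + 2 := by
  obtain ⟨f, h0, hL, hi, hs⟩ := hS
  obtain ⟨s, hsmem, hb1, hb2⟩ := taut_near hgeo hhyp h0 hL hi c
  exact ⟨f s, by rw [hs]; exact ⟨s, hsmem, rfl⟩, by linarith⟩

lemma claimA (hgeo : GeodesicSpace X) (hhyp : DeltaHyperbolic X 1)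
    {u v : X} {f : ℝ → X} (h0 : f 0 = u) (hL : f (dist u v) = v)
    (hi : ∀ t₁ ∈ Set.Icc (0 : ℝ) (dist u v), ∀ t₂ ∈ Set.Icc (0 : ℝ) (dist u v),
      dist (f t₁) (f t₂) = |t₁ - t₂|) (w : X) {t : ℝ} (ht : t ∈ Set.Icc (0:ℝ) (dist u v)) :
    dist w (f t) ≤ max (dist u w - t) (dist w v - (dist u v - t)) + 2 := by
  obtain ⟨suw, huw⟩ := hgeo u w
  obtain ⟨svw, hvw⟩ := hgeo v w
  have hS : IsGeodesicSegment (f '' Set.Icc (0:ℝ) (dist u v)) u v := ⟨f, h0, hL, hi, rfl⟩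
  have hthin := hhyp u v w _ suw svw hS huw hvw
  obtain ⟨e, he, hde⟩ := hthin (f t) ⟨t, ht, rfl⟩
  have hdl := param_dist_left h0 hi ht
  have hdr := param_dist_right hL hi ht
  rcases he with he | he
  · have hsum := geo_mem_dist huw he
    have h1 : dist u e ≥ t - 1 := by
      have : dist u (f t) ≤ dist u e + dist e (f t) := dist_triangle _ _ _
      rw [hdl] at this
      rw [dist_comm e (f t)] at this
      linarith
    have hew : dist e w = dist w e := dist_comm _ _
    have h2 : dist w (f t) ≤ dist e w + 1 := by
      rw [dist_comm w (f t)]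
      calc dist (f t) w ≤ dist (f t) e + dist e w := dist_triangle _ _ _
        _ ≤ dist e w + 1 := by linarith
    have h3 : dist w (f t) ≤ dist u w - t + 2 := by linarith
    exact le_trans h3 (by linarith [le_max_left (dist u w - t) (dist w v - (dist u v - t))])
  · have hsum := geo_mem_dist hvw he
    have h1 : dist v e ≥ (dist u v - t) - 1 := by
      have h2 : dist v (f t) ≤ dist v e + dist e (f t) := dist_triangle _ _ _
      rw [dist_comm v (f t), hdr] at h2
      rw [dist_comm e (f t)] at h2
      linarith
    have h3 : dist w (f t) ≤ dist e w + 1 := by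
      rw [dist_comm w (f t)]
      calc dist (f t) w ≤ dist (f t) e + dist e w := dist_triangle _ _ _
        _ ≤ dist e w + 1 := by linarith
    have hew : dist e w = dist w e := dist_comm _ _
    have hwv : dist v w = dist w v := dist_comm _ _
    have h4 : dist w (f t) ≤ dist w v - (dist u v - t) + 2 := by linarith
    exact le_trans h4 (by linarith [le_max_right (dist u w - t) (dist w v - (dist u v - t))])

/-- The unfolded shape of `Lemma15Data`. -/
def L15 (x0 x1 x2 r : X) (e12 : ℝ) (sxr srg srgh : Set X) : Prop :=
  IsGeodesicSegment sxr x0 r ∧ IsGeodesicSegment srg r x1 ∧ IsGeodesicSegment srgh r x2 ∧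
  dist x0 r + dist r x1 ≤ dist x0 x1 + 2 ∧
  dist x1 r + dist r x2 ≤ e12 + 2 ∧
  dist x0 r + dist r x2 ≤ dist x0 x2 + 2 ∧
  (∀ S : Set X, IsGeodesicSegment S x0 x1 → InNbhd (sxr ∪ srg) S 2) ∧
  (∀ S : Set X, IsGeodesicSegment S x1 x2 → InNbhd (srg ∪ srgh) S 2) ∧
  (∀ S : Set X, IsGeodesicSegment S x0 x2 → InNbhd (sxr ∪ srgh) S 2)

lemma nbhd_of_taut (hgeo : GeodesicSpace X) (hhyp : DeltaHyperbolic X 1)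
    {u v : X} {W : Set X} (h : ∀ c ∈ W, dist u c + dist c v ≤ dist u v + 2) :
    ∀ S : Set X, IsGeodesicSegment S u v → InNbhd W S 4 := by
  intro S hS c hc
  obtain ⟨m, hm, hd⟩ := taut_near_set hgeo hhyp hS (h c hc)
  exact ⟨m, hm, by linarith⟩

lemma near_endpoint (hgeo : GeodesicSpace X) (hhyp : DeltaHyperbolic X 1)
    {r z p : X} {s1 B : Set X} (hs1 : IsGeodesicSegment s1 r z)
    (hB : IsGeodesicSegment B p z) (hd : dist r p ≤ 4) : InNbhd s1 B 5 := by
  obtain ⟨Rp, hRp⟩ := hgeo r p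
  have hthin := hhyp r z p s1 Rp B hs1 hRp (geo_rev hB)
  intro c hc
  obtain ⟨e, he, hde⟩ := hthin c hc
  rcases he with he | he
  · have hsum := geo_mem_dist hRp he
    refine ⟨p, geo_left_mem hB, ?_⟩
    calc dist c p ≤ dist c e + dist e p := dist_triangle _ _ _
      _ ≤ 5 := by
        have := dist_nonneg (x := r) (y := e)
        linarith
  · exact ⟨e, he, by linarith⟩

lemma l15_center (hgeo : GeodesicSpace X) (hhyp : DeltaHyperbolic X 1)
    {x0 x1 x2 r : X} {sxr srg srgh : Set X} {γ : ℝ → X}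
    (hγ0 : γ 0 = x0) (hγL : γ (dist x0 x2) = x2)
    (hγi : ∀ t₁ ∈ Set.Icc (0 : ℝ) (dist x0 x2), ∀ t₂ ∈ Set.Icc (0 : ℝ) (dist x0 x2),
      dist (γ t₁) (γ t₂) = |t₁ - t₂|)
    (h15 : L15 x0 x1 x2 r (dist x1 x2) sxr srg srgh)
    (a : ℝ) (ha : a = (dist x0 x1 + dist x0 x2 - dist x1 x2) / 2) :
    dist x0 r ≤ a + 2 ∧ dist r x1 ≤ dist x0 x1 - a + 2 ∧
    dist r x2 ≤ dist x0 x2 - a + 2 ∧ dist r (γ a) ≤ 4 := by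
  obtain ⟨hsxr, hsrg, hsrgh, h4, h5, h6, h7, h8, h9⟩ := h15
  have c1 : dist x1 r = dist r x1 := dist_comm _ _
  have tri1 : dist x1 x2 ≤ dist x1 r + dist r x2 := dist_triangle _ _ _
  have tri2 : dist x0 x1 ≤ dist x0 r + dist r x1 := dist_triangle _ _ _
  have tri3 : dist x0 x2 ≤ dist x0 r + dist r x2 := dist_triangle _ _ _
  have hR : dist x0 r ≤ a + 2 := by rw [ha]; linarith
  have hr1 : dist r x1 ≤ dist x0 x1 - a + 2 := by rw [ha]; linarith
  have hr2 : dist r x2 ≤ dist x0 x2 - a + 2 := by rw [ha]; linarith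
  refine ⟨hR, hr1, hr2, ?_⟩
  have ha0 : 0 ≤ a := by
    rw [ha]; linarith [dist_triangle x1 x0 x2, dist_comm x1 x0]
  have ha2 : a ≤ dist x0 x2 := by
    rw [ha]; linarith [dist_triangle x0 x2 x1, dist_comm x2 x1]
  have hamem : a ∈ Set.Icc (0:ℝ) (dist x0 x2) := ⟨ha0, ha2⟩
  have hS : IsGeodesicSegment (γ '' Set.Icc (0:ℝ) (dist x0 x2)) x0 x2 := ⟨γ, hγ0, hγL, hγi, rfl⟩
  have hthin := hhyp x0 x2 r _ sxr srgh hS hsxr (geo_rev hsrgh)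
  obtain ⟨e, he, hde⟩ := hthin (γ a) ⟨a, hamem, rfl⟩
  have hdl : dist x0 (γ a) = a := param_dist_left hγ0 hγi hamem
  have hdr : dist (γ a) x2 = dist x0 x2 - a := param_dist_right hγL hγi hamem
  rcases he with he | he
  · have hsum := geo_mem_dist hsxr he
    have h1 : dist x0 e ≥ a - 1 := by
      have h2 : dist x0 (γ a) ≤ dist x0 e + dist e (γ a) := dist_triangle _ _ _
      rw [hdl, dist_comm e (γ a)] at h2
      linarith
    calc dist r (γ a) ≤ dist r e + dist e (γ a) := dist_triangle _ _ _
      _ ≤ 4 := by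
        rw [dist_comm r e, dist_comm e (γ a)]
        linarith
  · have hsum := geo_mem_dist hsrgh he
    have h1 : dist e x2 ≥ dist x0 x2 - a - 1 := by
      have h2 : dist (γ a) x2 ≤ dist (γ a) e + dist e x2 := dist_triangle _ _ _
      rw [hdr] at h2
      linarith
    calc dist r (γ a) ≤ dist r e + dist e (γ a) := dist_triangle _ _ _
      _ ≤ 4 := by
        rw [dist_comm e (γ a)]
        linarith

lemma l15_sxr (hgeo : GeodesicSpace X) (hhyp : DeltaHyperbolic X 1)
    {x0 x1 x2 r : X} {sxr srg srgh : Set X} {γ : ℝ → X}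
    (hγ0 : γ 0 = x0) (hγL : γ (dist x0 x2) = x2)
    (hγi : ∀ t₁ ∈ Set.Icc (0 : ℝ) (dist x0 x2), ∀ t₂ ∈ Set.Icc (0 : ℝ) (dist x0 x2),
      dist (γ t₁) (γ t₂) = |t₁ - t₂|)
    (h15 : L15 x0 x1 x2 r (dist x1 x2) sxr srg srgh)
    (a : ℝ) (ha : a = (dist x0 x1 + dist x0 x2 - dist x1 x2) / 2) :
    InNbhd sxr (γ '' Set.Icc 0 a) 5 := by
  obtain ⟨hR, hr1, hr2, hrγ⟩ := l15_center hgeo hhyp hγ0 hγL hγi h15 a ha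
  obtain ⟨hsxr, hsrg, hsrgh, h4, h5, h6, h7, h8, h9⟩ := h15
  have ha0 : 0 ≤ a := by
    rw [ha]; linarith [dist_triangle x1 x0 x2, dist_comm x1 x0]
  have ha2 : a ≤ dist x0 x2 := by
    rw [ha]; linarith [dist_triangle x0 x2 x1, dist_comm x2 x1]
  have hS : IsGeodesicSegment (γ '' Set.Icc (0:ℝ) (dist x0 x2)) x0 x2 := ⟨γ, hγ0, hγL, hγi, rfl⟩
  intro c hc
  have hsum := geo_mem_dist hsxr hc
  obtain ⟨m, hm, hdm⟩ := h9 _ hS c (Or.inl hc)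
  obtain ⟨s, hsmem, rfl⟩ := hm
  rcases le_or_gt s a with hsa | hsa
  · exact ⟨γ s, ⟨s, ⟨hsmem.1, hsa⟩, rfl⟩, by linarith⟩
  · have hga : dist (γ s) (γ a) = s - a := by
      rw [hγi s hsmem a ⟨ha0, ha2⟩, abs_of_nonneg (by linarith)]
    have hxs : dist x0 (γ s) = s := param_dist_left hγ0 hγi hsmem
    have hb1 : dist c (γ a) ≤ 2 + (s - a) := by
      calc dist c (γ a) ≤ dist c (γ s) + dist (γ s) (γ a) := dist_triangle _ _ _
        _ ≤ 2 + (s - a) := by rw [hga]; linarith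
    have hs_le : s ≤ dist x0 c + 2 := by
      calc s = dist x0 (γ s) := hxs.symm
        _ ≤ dist x0 c + dist c (γ s) := dist_triangle _ _ _
        _ ≤ dist x0 c + 2 := by linarith
    have hb2 : dist c (γ a) ≤ dist c r + 4 := by
      calc dist c (γ a) ≤ dist c r + dist r (γ a) := dist_triangle _ _ _
        _ ≤ dist c r + 4 := by linarith
    refine ⟨γ a, ⟨a, ⟨ha0, le_refl a⟩, rfl⟩, ?_⟩
    rcases le_or_gt (dist x0 c) (a + 1) with hcase | hcase
    · linarith
    · linarith

lemma case1 (hgeo : GeodesicSpace X) (hhyp : DeltaHyperbolic X 1) (x0 x1 x2 x3 : X)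
    (hab : (dist x0 x1 + dist x0 x2 - dist x1 x2) / 2
      ≤ (dist x0 x2 + dist x0 x3 - dist x2 x3) / 2) :
    ∃ p q : X, ∃ A B C D E : Set X,
      IsGeodesicSegment A x0 p ∧ IsGeodesicSegment B p x1 ∧
      IsGeodesicSegment C p q ∧ IsGeodesicSegment D q x2 ∧
      IsGeodesicSegment E q x3 ∧
      dist x0 p + dist p x1 ≤ dist x0 x1 + 4 ∧
      dist x1 p + dist p q + dist q x2 ≤ dist x1 x2 + 4 ∧
      dist x2 q + dist q x3 ≤ dist x2 x3 + 4 ∧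
      dist x0 p + dist p q + dist q x3 ≤ dist x0 x3 + 4 ∧
      (∀ S : Set X, IsGeodesicSegment S x0 x1 → InNbhd (A ∪ B) S 4) ∧
      (∀ S : Set X, IsGeodesicSegment S x1 x2 → InNbhd (B ∪ C ∪ D) S 4) ∧
      (∀ S : Set X, IsGeodesicSegment S x2 x3 → InNbhd (D ∪ E) S 4) ∧
      (∀ S : Set X, IsGeodesicSegment S x0 x3 → InNbhd (A ∪ C ∪ E) S 4) ∧
      (∀ (r : X) (sxr srg srgh : Set X), L15 x0 x1 x2 r (dist x1 x2) sxr srg srgh →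
        InNbhd sxr A 5 ∧ InNbhd srg B 5 ∧ InNbhd srgh (C ∪ D) 5) := by
  obtain ⟨S02, γ, hγ0, hγL, hγi, hγs⟩ := hgeo x0 x2
  set a : ℝ := (dist x0 x1 + dist x0 x2 - dist x1 x2) / 2 with ha
  set b : ℝ := (dist x0 x2 + dist x0 x3 - dist x2 x3) / 2 with hb
  have ha0 : 0 ≤ a := by
    rw [ha]; linarith [dist_triangle x1 x0 x2, dist_comm x1 x0]
  have ha2 : a ≤ dist x0 x2 := by
    rw [ha]; linarith [dist_triangle x0 x2 x1, dist_comm x2 x1]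
  have ha1 : a ≤ dist x0 x1 := by
    rw [ha]; linarith [dist_triangle x0 x1 x2]
  have hb0 : 0 ≤ b := by
    rw [hb]; linarith [dist_triangle x2 x0 x3, dist_comm x2 x0]
  have hb2 : b ≤ dist x0 x2 := by
    rw [hb]; linarith [dist_triangle x0 x2 x3]
  have hb3 : b ≤ dist x0 x3 := by
    rw [hb]; linarith [dist_triangle x0 x3 x2, dist_comm x3 x2]
  -- point distances
  have hamem : a ∈ Set.Icc (0:ℝ) (dist x0 x2) := ⟨ha0, ha2⟩
  have hbmem : b ∈ Set.Icc (0:ℝ) (dist x0 x2) := ⟨hb0, hb2⟩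
  have hxp : dist x0 (γ a) = a := param_dist_left hγ0 hγi hamem
  have hpx2 : dist (γ a) x2 = dist x0 x2 - a := param_dist_right hγL hγi hamem
  have hxq : dist x0 (γ b) = b := param_dist_left hγ0 hγi hbmem
  have hqx2 : dist (γ b) x2 = dist x0 x2 - b := param_dist_right hγL hγi hbmem
  have hpq : dist (γ a) (γ b) = b - a := by
    rw [hγi a hamem b hbmem, abs_of_nonpos (by linarith)]; ring
  -- claimA instances
  have HA1 : ∀ t ∈ Set.Icc (0:ℝ) (dist x0 x2),
      dist x1 (γ t) ≤ max (dist x0 x1 - t) (dist x1 x2 - (dist x0 x2 - t)) + 2 :=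
    fun t ht => claimA hgeo hhyp hγ0 hγL hγi x1 ht
  have HA3 : ∀ t ∈ Set.Icc (0:ℝ) (dist x0 x2),
      dist x3 (γ t) ≤ max (dist x0 x3 - t) (dist x3 x2 - (dist x0 x2 - t)) + 2 :=
    fun t ht => claimA hgeo hhyp hγ0 hγL hγi x3 ht
  have hid : dist x0 x1 - a = dist x1 x2 - (dist x0 x2 - a) := by rw [ha]; ring
  have hidb : dist x0 x3 - b = dist x3 x2 - (dist x0 x2 - b) := by
    rw [hb]; linarith [dist_comm x3 x2]
  have h_p_x1 : dist x1 (γ a) ≤ dist x0 x1 - a + 2 := by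
    have h := HA1 a hamem
    have hm : max (dist x0 x1 - a) (dist x1 x2 - (dist x0 x2 - a)) ≤ dist x0 x1 - a :=
      max_le (le_refl _) (by linarith)
    linarith
  have h_q_x3 : dist x3 (γ b) ≤ dist x0 x3 - b + 2 := by
    have h := HA3 b hbmem
    have hm : max (dist x0 x3 - b) (dist x3 x2 - (dist x0 x2 - b)) ≤ dist x0 x3 - b :=
      max_le (le_refl _) (by linarith)
    linarith
  -- segments
  have hA : IsGeodesicSegment (γ '' Set.Icc 0 a) x0 (γ a) := by
    have := geo_sub hγ0 hγL hγi (le_refl (0:ℝ)) ha0 ha2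
    rwa [hγ0] at this
  have hC : IsGeodesicSegment (γ '' Set.Icc a b) (γ a) (γ b) :=
    geo_sub hγ0 hγL hγi ha0 hab hb2
  obtain ⟨B, hB⟩ := hgeo (γ a) x1
  obtain ⟨D, hD⟩ := hgeo (γ b) x2
  obtain ⟨E, hE⟩ := hgeo (γ b) x3
  have hpx1 : dist (γ a) x1 = dist x1 (γ a) := dist_comm _ _
  have hqx3 : dist (γ b) x3 = dist x3 (γ b) := dist_comm _ _
  refine ⟨γ a, γ b, γ '' Set.Icc 0 a, B, γ '' Set.Icc a b, D, E,
    hA, hB, hC, hD, hE, ?_, ?_, ?_, ?_, ?_, ?_, ?_, ?_, ?_⟩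
  · linarith
  · linarith [dist_comm x1 (γ a), dist_comm x2 (γ b)]
  · linarith [dist_comm x2 (γ b), dist_comm x3 x2]
  · linarith
  -- w_g in 4-nbhd of [x0,x1]
  · apply nbhd_of_taut hgeo hhyp
    intro c hc
    rcases hc with hc | hc
    · obtain ⟨t, ⟨ht0, hta⟩, rfl⟩ := hc
      have htm : t ∈ Set.Icc (0:ℝ) (dist x0 x2) := ⟨ht0, le_trans hta ha2⟩
      have h1 : dist x0 (γ t) = t := param_dist_left hγ0 hγi htm
      have h2 : dist (γ t) (γ a) = a - t := by
        rw [hγi t htm a hamem, abs_of_nonpos (by linarith)]; ring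
      have h3 : dist (γ t) x1 ≤ dist (γ t) (γ a) + dist (γ a) x1 := dist_triangle _ _ _
      linarith
    · have hsum := geo_mem_dist hB hc
      have h3 : dist x0 c ≤ dist x0 (γ a) + dist (γ a) c := dist_triangle _ _ _
      linarith
  -- w_h in 4-nbhd of [x1,x2]
  · apply nbhd_of_taut hgeo hhyp
    intro c hc
    rcases hc with (hc | hc) | hc
    · have hsum := geo_mem_dist hB hc
      have h3 : dist c x2 ≤ dist c (γ a) + dist (γ a) x2 := dist_triangle _ _ _
      have h4 : dist x1 c = dist c x1 := dist_comm _ _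
      have h5 : dist c (γ a) = dist (γ a) c := dist_comm _ _
      linarith
    · obtain ⟨t, ⟨hta, htb⟩, rfl⟩ := hc
      have htm : t ∈ Set.Icc (0:ℝ) (dist x0 x2) := ⟨le_trans ha0 hta, le_trans htb hb2⟩
      have h1 : dist (γ t) x2 = dist x0 x2 - t := param_dist_right hγL hγi htm
      have h2 : dist (γ a) (γ t) = t - a := by
        rw [hγi a hamem t htm, abs_of_nonpos (by linarith)]; ring
      have h3 : dist x1 (γ t) ≤ dist x1 (γ a) + dist (γ a) (γ t) := dist_triangle _ _ _
      linarith
    · have hsum := geo_mem_dist hD hc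
      have h3 : dist x1 c ≤ dist x1 (γ a) + dist (γ a) (γ b) + dist (γ b) c := by
        calc dist x1 c ≤ dist x1 (γ b) + dist (γ b) c := dist_triangle _ _ _
          _ ≤ dist x1 (γ a) + dist (γ a) (γ b) + dist (γ b) c := by
              linarith [dist_triangle x1 (γ a) (γ b)]
      linarith
  -- w_f in 4-nbhd of [x2,x3]
  · apply nbhd_of_taut hgeo hhyp
    intro c hc
    rcases hc with hc | hc
    · have hsum := geo_mem_dist hD hc
      have h3 : dist c x3 ≤ dist c (γ b) + dist (γ b) x3 := dist_triangle _ _ _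
      have h4 : dist x2 c = dist c x2 := dist_comm _ _
      have h5 : dist c (γ b) = dist (γ b) c := dist_comm _ _
      have h6 : dist (γ b) x3 = dist x3 (γ b) := dist_comm _ _
      have h7 : dist x3 x2 = dist x2 x3 := dist_comm _ _
      linarith
    · have hsum := geo_mem_dist hE hc
      have h3 : dist x2 c ≤ dist x2 (γ b) + dist (γ b) c := dist_triangle _ _ _
      have h4 : dist x2 (γ b) = dist (γ b) x2 := dist_comm _ _
      have h5 : dist x3 x2 = dist x2 x3 := dist_comm _ _
      linarith
  -- w_ghf in 4-nbhd of [x0,x3]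
  · apply nbhd_of_taut hgeo hhyp
    have key : ∀ t, 0 ≤ t → t ≤ b →
        dist x0 (γ t) + dist (γ t) x3 ≤ dist x0 x3 + 2 := by
      intro t ht0 htb
      have htm : t ∈ Set.Icc (0:ℝ) (dist x0 x2) := ⟨ht0, le_trans htb hb2⟩
      have h1 : dist x0 (γ t) = t := param_dist_left hγ0 hγi htm
      have h2 : dist (γ t) (γ b) = b - t := by
        rw [hγi t htm b hbmem, abs_of_nonpos (by linarith)]; ring
      have h3 : dist (γ t) x3 ≤ dist (γ t) (γ b) + dist (γ b) x3 := dist_triangle _ _ _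
      linarith
    intro c hc
    rcases hc with (hc | hc) | hc
    · obtain ⟨t, ⟨ht0, hta⟩, rfl⟩ := hc
      exact key t ht0 (le_trans hta hab)
    · obtain ⟨t, ⟨hta, htb⟩, rfl⟩ := hc
      exact key t (le_trans ha0 hta) htb
    · have hsum := geo_mem_dist hE hc
      have h3 : dist x0 c ≤ dist x0 (γ b) + dist (γ b) c := dist_triangle _ _ _
      linarith
  -- compatibility with Lemma 15 data
  · intro r sxr srg srgh h15
    obtain ⟨hR, hr1, hr2, hrp⟩ := l15_center hgeo hhyp hγ0 hγL hγi h15 a ha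
    refine ⟨l15_sxr hgeo hhyp hγ0 hγL hγi h15 a ha, ?_, ?_⟩
    · exact near_endpoint hgeo hhyp h15.2.1 hB hrp
    · obtain ⟨Rp, hRp⟩ := hgeo r (γ a)
      obtain ⟨S', hS'⟩ := hgeo (γ a) x2
      have hthin1 := hhyp r x2 (γ a) srgh Rp S' h15.2.2.1 hRp (geo_rev hS')
      have hthin2 := hhyp (γ a) x2 (γ b) S' (γ '' Set.Icc a b) D hS' hC (geo_rev hD)
      intro c hc
      obtain ⟨e, he, hde⟩ := hthin1 c hc
      rcases he with he | he
      · have hsum := geo_mem_dist hRp he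
        refine ⟨γ a, Or.inl ⟨a, ⟨le_refl a, hab⟩, rfl⟩, ?_⟩
        calc dist c (γ a) ≤ dist c e + dist e (γ a) := dist_triangle _ _ _
          _ ≤ 5 := by linarith [dist_nonneg (x := r) (y := e)]
      · obtain ⟨m, hm, hdm⟩ := hthin2 e he
        refine ⟨m, hm, ?_⟩
        calc dist c m ≤ dist c e + dist e m := dist_triangle _ _ _
          _ ≤ 5 := by linarith

lemma case2 (hgeo : GeodesicSpace X) (hhyp : DeltaHyperbolic X 1) (x0 x1 x2 x3 : X)
    (hba : (dist x0 x2 + dist x0 x3 - dist x2 x3) / 2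
      ≤ (dist x0 x1 + dist x0 x2 - dist x1 x2) / 2) :
    ∃ p q : X, ∃ A C Qg D P : Set X,
      IsGeodesicSegment A x0 p ∧ IsGeodesicSegment C p q ∧
      IsGeodesicSegment Qg q x1 ∧ IsGeodesicSegment D q x2 ∧
      IsGeodesicSegment P p x3 ∧
      dist x0 p + dist p q + dist q x1 ≤ dist x0 x1 + 4 ∧
      dist x1 q + dist q x2 ≤ dist x1 x2 + 4 ∧
      dist x2 q + dist q p + dist p x3 ≤ dist x2 x3 + 4 ∧
      dist x0 p + dist p x3 ≤ dist x0 x3 + 4 ∧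
      (∀ S : Set X, IsGeodesicSegment S x0 x1 → InNbhd C S 4) ∧
      (∀ S : Set X, IsGeodesicSegment S x2 x3 → InNbhd C S 4) ∧
      (∃ Sg : Set X, IsGeodesicSegment Sg x0 x1 ∧ ∃ a' ∈ Sg, ∃ b' ∈ Sg,
        ∃ τ : Set X, IsGeodesicSegment τ a' b' ∧ τ ⊆ Sg ∧
          dist p q ≤ dist a' b' ∧ InNbhd τ C 5) ∧
      (∃ Sf : Set X, IsGeodesicSegment Sf x2 x3 ∧ ∃ a' ∈ Sf, ∃ b' ∈ Sf,
        ∃ τ : Set X, IsGeodesicSegment τ a' b' ∧ τ ⊆ Sf ∧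
          dist p q ≤ dist a' b' ∧ InNbhd τ C 5) ∧
      (∀ S : Set X, IsGeodesicSegment S x0 x1 → InNbhd (A ∪ C ∪ Qg) S 4) ∧
      (∀ S : Set X, IsGeodesicSegment S x1 x2 → InNbhd (Qg ∪ D) S 4) ∧
      (∀ S : Set X, IsGeodesicSegment S x2 x3 → InNbhd (D ∪ C ∪ P) S 4) ∧
      (∀ S : Set X, IsGeodesicSegment S x0 x3 → InNbhd (A ∪ P) S 4) ∧
      (∀ (r : X) (sxr srg srgh : Set X), L15 x0 x1 x2 r (dist x1 x2) sxr srg srgh →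
        InNbhd sxr (A ∪ C) 5 ∧ InNbhd srg Qg 5 ∧ InNbhd srgh D 5) := by
  obtain ⟨S02, γ, hγ0, hγL, hγi, hγs⟩ := hgeo x0 x2
  set a : ℝ := (dist x0 x1 + dist x0 x2 - dist x1 x2) / 2 with ha
  set b : ℝ := (dist x0 x2 + dist x0 x3 - dist x2 x3) / 2 with hb
  have ha' : 2 * a = dist x0 x1 + dist x0 x2 - dist x1 x2 := by rw [ha]; ring
  have hb' : 2 * b = dist x0 x2 + dist x0 x3 - dist x2 x3 := by rw [hb]; ring
  have ha0 : 0 ≤ a := by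
    rw [ha]; linarith [dist_triangle x1 x0 x2, dist_comm x1 x0]
  have ha2 : a ≤ dist x0 x2 := by
    rw [ha]; linarith [dist_triangle x0 x2 x1, dist_comm x2 x1]
  have ha1 : a ≤ dist x0 x1 := by
    rw [ha]; linarith [dist_triangle x0 x1 x2]
  have hb0 : 0 ≤ b := by
    rw [hb]; linarith [dist_triangle x2 x0 x3, dist_comm x2 x0]
  have hb2 : b ≤ dist x0 x2 := by
    rw [hb]; linarith [dist_triangle x0 x2 x3]
  have hb3 : b ≤ dist x0 x3 := by
    rw [hb]; linarith [dist_triangle x0 x3 x2, dist_comm x3 x2]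
  have hb23 : dist x0 x2 - b ≤ dist x2 x3 := by
    rw [hb]; linarith [dist_triangle x0 x3 x2, dist_comm x3 x2]
  have hamem : a ∈ Set.Icc (0:ℝ) (dist x0 x2) := ⟨ha0, ha2⟩
  have hbmem : b ∈ Set.Icc (0:ℝ) (dist x0 x2) := ⟨hb0, hb2⟩
  have hxp : dist x0 (γ b) = b := param_dist_left hγ0 hγi hbmem
  have hpx2 : dist (γ b) x2 = dist x0 x2 - b := param_dist_right hγL hγi hbmem
  have hxq : dist x0 (γ a) = a := param_dist_left hγ0 hγi hamem
  have hqx2 : dist (γ a) x2 = dist x0 x2 - a := param_dist_right hγL hγi hamem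
  have hpq : dist (γ b) (γ a) = a - b := by
    rw [hγi b hbmem a hamem, abs_of_nonpos (by linarith)]; ring
  -- claimA instances on γ
  have hA1t : ∀ t, 0 ≤ t → t ≤ a → dist x1 (γ t) ≤ dist x0 x1 - t + 2 := by
    intro t ht0 hta
    have h := claimA hgeo hhyp hγ0 hγL hγi x1 (t := t) ⟨ht0, le_trans hta ha2⟩
    have hm : max (dist x0 x1 - t) (dist x1 x2 - (dist x0 x2 - t)) ≤ dist x0 x1 - t :=
      max_le (le_refl _) (by linarith)
    linarith
  have hA3t : ∀ t, b ≤ t → t ≤ dist x0 x2 →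
      dist x3 (γ t) ≤ dist x2 x3 - (dist x0 x2 - t) + 2 := by
    intro t htb ht2
    have h := claimA hgeo hhyp hγ0 hγL hγi x3 (t := t) ⟨le_trans hb0 htb, ht2⟩
    have hcm : dist x3 x2 = dist x2 x3 := dist_comm _ _
    have hm : max (dist x0 x3 - t) (dist x3 x2 - (dist x0 x2 - t))
        ≤ dist x2 x3 - (dist x0 x2 - t) := by
      apply max_le _ (by linarith)
      linarith
    linarith
  have h_q_x1 : dist x1 (γ a) ≤ dist x0 x1 - a + 2 := hA1t a ha0 (le_refl a)
  have h_p_x3 : dist x3 (γ b) ≤ dist x0 x3 - b + 2 := by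
    have h := hA3t b (le_refl b) hb2
    linarith
  have hid : dist x0 x1 - a = dist x1 x2 - (dist x0 x2 - a) := by linarith
  -- segments
  have hA : IsGeodesicSegment (γ '' Set.Icc 0 b) x0 (γ b) := by
    have := geo_sub hγ0 hγL hγi (le_refl (0:ℝ)) hb0 hb2
    rwa [hγ0] at this
  have hC : IsGeodesicSegment (γ '' Set.Icc b a) (γ b) (γ a) :=
    geo_sub hγ0 hγL hγi hb0 hba ha2
  have hD : IsGeodesicSegment (γ '' Set.Icc a (dist x0 x2)) (γ a) x2 := by
    have := geo_sub hγ0 hγL hγi ha0 ha2 (le_refl (dist x0 x2))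
    rwa [hγL] at this
  obtain ⟨Qg, hQg⟩ := hgeo (γ a) x1
  obtain ⟨P, hP⟩ := hgeo (γ b) x3
  -- tautness of C-points
  have keyC1 : ∀ t, 0 ≤ t → t ≤ a → dist x0 (γ t) + dist (γ t) x1 ≤ dist x0 x1 + 2 := by
    intro t ht0 hta
    have htm : t ∈ Set.Icc (0:ℝ) (dist x0 x2) := ⟨ht0, le_trans hta ha2⟩
    have h1 : dist x0 (γ t) = t := param_dist_left hγ0 hγi htm
    have h2 := hA1t t ht0 hta
    have h3 : dist (γ t) x1 = dist x1 (γ t) := dist_comm _ _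
    linarith
  have keyC2 : ∀ t, b ≤ t → t ≤ dist x0 x2 →
      dist x2 (γ t) + dist (γ t) x3 ≤ dist x2 x3 + 2 := by
    intro t htb ht2
    have htm : t ∈ Set.Icc (0:ℝ) (dist x0 x2) := ⟨le_trans hb0 htb, ht2⟩
    have h1 : dist (γ t) x2 = dist x0 x2 - t := param_dist_right hγL hγi htm
    have h2 := hA3t t htb ht2
    have h3 : dist (γ t) x3 = dist x3 (γ t) := dist_comm _ _
    have h4 : dist x2 (γ t) = dist (γ t) x2 := dist_comm _ _
    linarith
  refine ⟨γ b, γ a, γ '' Set.Icc 0 b, γ '' Set.Icc b a, Qg,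
    γ '' Set.Icc a (dist x0 x2), P, hA, hC, hQg, hD, hP, ?_, ?_, ?_, ?_,
    ?_, ?_, ?_, ?_, ?_, ?_, ?_, ?_, ?_⟩
  · linarith [dist_comm x1 (γ a)]
  · linarith
  · linarith [dist_comm x2 (γ a), dist_comm (γ a) (γ b), dist_comm x3 (γ b)]
  · linarith [dist_comm x3 (γ b)]
  -- C in 4-nbhd of [x0,x1]
  · apply nbhd_of_taut hgeo hhyp
    rintro c ⟨t, ⟨htb, hta⟩, rfl⟩
    exact keyC1 t (le_trans hb0 htb) hta
  -- C in 4-nbhd of [x2,x3]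
  · apply nbhd_of_taut hgeo hhyp
    rintro c ⟨t, ⟨htb, hta⟩, rfl⟩
    exact keyC2 t htb (le_trans hta ha2)
  -- subsegment of [x0,x1]
  · obtain ⟨Sg, η, hη0, hηL, hηi, hηs⟩ := hgeo x0 x1
    have hbm1 : b ∈ Set.Icc (0:ℝ) (dist x0 x1) := ⟨hb0, le_trans hba ha1⟩
    have ham1 : a ∈ Set.Icc (0:ℝ) (dist x0 x1) := ⟨ha0, ha1⟩
    refine ⟨Sg, ⟨η, hη0, hηL, hηi, hηs⟩, η b, ?_, η a, ?_,
      η '' Set.Icc b a, geo_sub hη0 hηL hηi hb0 hba ha1, ?_, ?_, ?_⟩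
    · rw [hηs]; exact ⟨b, hbm1, rfl⟩
    · rw [hηs]; exact ⟨a, ham1, rfl⟩
    · rw [hηs]; exact Set.image_mono (f := η) (Set.Icc_subset_Icc hb0 ha1)
    · have : dist (η b) (η a) = a - b := by
        rw [hηi b hbm1 a ham1, abs_of_nonpos (by linarith)]; ring
      rw [this, hpq]
    · rintro c ⟨t, ⟨htb, hta⟩, rfl⟩
      have htm1 : t ∈ Set.Icc (0:ℝ) (dist x0 x1) := ⟨le_trans hb0 htb, le_trans hta ha1⟩
      have hd0 : dist x0 (η t) = t := param_dist_left hη0 hηi htm1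
      have hd1 : dist (η t) x1 = dist x0 x1 - t := param_dist_right hηL hηi htm1
      have hw : dist x2 (η t) ≤ dist x0 x2 - t + 2 := by
        have h := claimA hgeo hhyp hη0 hηL hηi x2 (t := t) htm1
        have hcm : dist x2 x1 = dist x1 x2 := dist_comm _ _
        have hm : max (dist x0 x2 - t) (dist x2 x1 - (dist x0 x1 - t))
            ≤ dist x0 x2 - t := max_le (le_refl _) (by linarith)
        linarith
      obtain ⟨s, hsmem, hs1, hs2⟩ := taut_near hgeo hhyp hγ0 hγL hγi (η t)
      rw [hd0] at hs1
      have hs2' : dist (η t) (γ s) ≤ s - t + 4 := by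
        have hcm : dist (η t) x2 = dist x2 (η t) := dist_comm _ _
        linarith
      rcases lt_or_ge s b with hsb | hsb
      · refine ⟨γ b, ⟨b, ⟨le_refl b, hba⟩, rfl⟩, ?_⟩
        have hsg : dist (γ s) (γ b) = b - s := by
          rw [hγi s hsmem b hbmem, abs_of_nonpos (by linarith)]; ring
        calc dist (η t) (γ b) ≤ dist (η t) (γ s) + dist (γ s) (γ b) := dist_triangle _ _ _
          _ ≤ 5 := by rw [hsg]; linarith
      rcases le_or_gt s a with hsa | hsa
      · exact ⟨γ s, ⟨s, ⟨hsb, hsa⟩, rfl⟩, by linarith⟩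
      · refine ⟨γ a, ⟨a, ⟨hba, le_refl a⟩, rfl⟩, ?_⟩
        have hsg : dist (γ s) (γ a) = s - a := by
          rw [hγi s hsmem a hamem, abs_of_nonneg (by linarith)]
        calc dist (η t) (γ a) ≤ dist (η t) (γ s) + dist (γ s) (γ a) := dist_triangle _ _ _
          _ ≤ 5 := by rw [hsg]; linarith
  -- subsegment of [x2,x3]
  · obtain ⟨Sf, η, hη0, hηL, hηi, hηs⟩ := hgeo x2 x3
    have hu10 : (0:ℝ) ≤ dist x0 x2 - a := by linarith
    have hu12 : dist x0 x2 - a ≤ dist x0 x2 - b := by linarith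
    have hu2L : dist x0 x2 - b ≤ dist x2 x3 := hb23
    have hum1 : dist x0 x2 - a ∈ Set.Icc (0:ℝ) (dist x2 x3) :=
      ⟨hu10, le_trans hu12 hu2L⟩
    have hum2 : dist x0 x2 - b ∈ Set.Icc (0:ℝ) (dist x2 x3) :=
      ⟨le_trans hu10 hu12, hu2L⟩
    refine ⟨Sf, ⟨η, hη0, hηL, hηi, hηs⟩, η (dist x0 x2 - a), ?_, η (dist x0 x2 - b), ?_,
      η '' Set.Icc (dist x0 x2 - a) (dist x0 x2 - b),
      geo_sub hη0 hηL hηi hu10 hu12 hu2L, ?_, ?_, ?_⟩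
    · rw [hηs]; exact ⟨_, hum1, rfl⟩
    · rw [hηs]; exact ⟨_, hum2, rfl⟩
    · rw [hηs]; exact Set.image_mono (f := η) (Set.Icc_subset_Icc hu10 hu2L)
    · have : dist (η (dist x0 x2 - a)) (η (dist x0 x2 - b)) = a - b := by
        rw [hηi _ hum1 _ hum2, abs_of_nonpos (by linarith)]; ring
      rw [this, hpq]
    · rintro c ⟨u, ⟨hua, hub⟩, rfl⟩
      have hum : u ∈ Set.Icc (0:ℝ) (dist x2 x3) :=
        ⟨le_trans hu10 hua, le_trans hub hu2L⟩
      have hd2 : dist x2 (η u) = u := param_dist_left hη0 hηi hum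
      have hw : dist x0 (η u) ≤ dist x0 x2 - u + 2 := by
        have h := claimA hgeo hhyp hη0 hηL hηi x0 (t := u) hum
        have hcm : dist x2 x0 = dist x0 x2 := dist_comm _ _
        have hm : max (dist x2 x0 - u) (dist x0 x3 - (dist x2 x3 - u))
            ≤ dist x0 x2 - u := by
          apply max_le (by linarith)
          linarith
        linarith
      obtain ⟨s, hsmem, hs1, hs2⟩ := taut_near hgeo hhyp hγ0 hγL hγi (η u)
      have hs1' : dist (η u) (γ s) ≤ dist x0 x2 - u - s + 4 := by linarith
      have hs2' : dist (η u) (γ s) ≤ u - dist x0 x2 + s + 2 := by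
        have hcm : dist (η u) x2 = dist x2 (η u) := dist_comm _ _
        linarith
      rcases lt_or_ge s b with hsb | hsb
      · refine ⟨γ b, ⟨b, ⟨le_refl b, hba⟩, rfl⟩, ?_⟩
        have hsg : dist (γ s) (γ b) = b - s := by
          rw [hγi s hsmem b hbmem, abs_of_nonpos (by linarith)]; ring
        calc dist (η u) (γ b) ≤ dist (η u) (γ s) + dist (γ s) (γ b) := dist_triangle _ _ _
          _ ≤ 5 := by rw [hsg]; linarith
      rcases le_or_gt s a with hsa | hsa
      · exact ⟨γ s, ⟨s, ⟨hsb, hsa⟩, rfl⟩, by linarith⟩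
      · refine ⟨γ a, ⟨a, ⟨hba, le_refl a⟩, rfl⟩, ?_⟩
        have hsg : dist (γ s) (γ a) = s - a := by
          rw [hγi s hsmem a hamem, abs_of_nonneg (by linarith)]
        calc dist (η u) (γ a) ≤ dist (η u) (γ s) + dist (γ s) (γ a) := dist_triangle _ _ _
          _ ≤ 5 := by rw [hsg]; linarith
  -- w_g in 4-nbhd of [x0,x1]
  · apply nbhd_of_taut hgeo hhyp
    intro c hc
    rcases hc with (hc | hc) | hc
    · obtain ⟨t, ⟨ht0, htb⟩, rfl⟩ := hc
      exact keyC1 t ht0 (le_trans htb hba)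
    · obtain ⟨t, ⟨htb, hta⟩, rfl⟩ := hc
      exact keyC1 t (le_trans hb0 htb) hta
    · have hsum := geo_mem_dist hQg hc
      have h3 : dist x0 c ≤ dist x0 (γ a) + dist (γ a) c := dist_triangle _ _ _
      linarith [dist_comm (γ a) x1]
  -- w_h in 4-nbhd of [x1,x2]
  · apply nbhd_of_taut hgeo hhyp
    intro c hc
    rcases hc with hc | hc
    · have hsum := geo_mem_dist hQg hc
      have h3 : dist c x2 ≤ dist c (γ a) + dist (γ a) x2 := dist_triangle _ _ _
      have h4 : dist x1 c = dist c x1 := dist_comm _ _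
      have h5 : dist c (γ a) = dist (γ a) c := dist_comm _ _
      have h6 : dist (γ a) x1 = dist x1 (γ a) := dist_comm _ _
      linarith
    · obtain ⟨t, ⟨hta, ht2⟩, rfl⟩ := hc
      have htm : t ∈ Set.Icc (0:ℝ) (dist x0 x2) := ⟨le_trans ha0 hta, ht2⟩
      have h1 : dist (γ t) x2 = dist x0 x2 - t := param_dist_right hγL hγi htm
      have h2 : dist (γ a) (γ t) = t - a := by
        rw [hγi a hamem t htm, abs_of_nonpos (by linarith)]; ring
      have h3 : dist x1 (γ t) ≤ dist x1 (γ a) + dist (γ a) (γ t) := dist_triangle _ _ _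
      linarith
  -- w_f in 4-nbhd of [x2,x3]
  · apply nbhd_of_taut hgeo hhyp
    intro c hc
    rcases hc with (hc | hc) | hc
    · obtain ⟨t, ⟨hta, ht2⟩, rfl⟩ := hc
      exact keyC2 t (le_trans hba hta) ht2
    · obtain ⟨t, ⟨htb, hta⟩, rfl⟩ := hc
      exact keyC2 t htb (le_trans hta ha2)
    · have hsum := geo_mem_dist hP hc
      have h3 : dist x2 c ≤ dist x2 (γ b) + dist (γ b) c := dist_triangle _ _ _
      have h4 : dist x2 (γ b) = dist (γ b) x2 := dist_comm _ _
      have h5 : dist (γ b) x3 = dist x3 (γ b) := dist_comm _ _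
      linarith
  -- w_ghf in 4-nbhd of [x0,x3]
  · apply nbhd_of_taut hgeo hhyp
    intro c hc
    rcases hc with hc | hc
    · obtain ⟨t, ⟨ht0, htb⟩, rfl⟩ := hc
      have htm : t ∈ Set.Icc (0:ℝ) (dist x0 x2) := ⟨ht0, le_trans htb hb2⟩
      have h1 : dist x0 (γ t) = t := param_dist_left hγ0 hγi htm
      have h2 : dist (γ t) (γ b) = b - t := by
        rw [hγi t htm b hbmem, abs_of_nonpos (by linarith)]; ring
      have h3 : dist (γ t) x3 ≤ dist (γ t) (γ b) + dist (γ b) x3 := dist_triangle _ _ _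
      have h5 : dist (γ b) x3 = dist x3 (γ b) := dist_comm _ _
      linarith
    · have hsum := geo_mem_dist hP hc
      have h3 : dist x0 c ≤ dist x0 (γ b) + dist (γ b) c := dist_triangle _ _ _
      have h5 : dist (γ b) x3 = dist x3 (γ b) := dist_comm _ _
      linarith
  -- compatibility with Lemma 15 data
  · intro r sxr srg srgh h15
    obtain ⟨hR, hr1, hr2, hrq⟩ := l15_center hgeo hhyp hγ0 hγL hγi h15 a ha
    have hAC : γ '' Set.Icc 0 b ∪ γ '' Set.Icc b a = γ '' Set.Icc 0 a := by
      rw [← Set.image_union, Set.Icc_union_Icc_eq_Icc hb0 hba]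
    refine ⟨?_, near_endpoint hgeo hhyp h15.2.1 hQg hrq,
      near_endpoint hgeo hhyp h15.2.2.1 hD hrq⟩
    rw [hAC]
    exact l15_sxr hgeo hhyp hγ0 hγL hγi h15 a ha

lemma master (hgeo : GeodesicSpace X) (hhyp : DeltaHyperbolic X 1)
    (x0 x1 x2 x3 : X) (e12 e23 : ℝ) (he12 : dist x1 x2 = e12) (he23 : dist x2 x3 = e23) :
    ∃ p q : X,
      -- Case (1): first type of thin quadrilateral
      (∃ A B C D E : Set X,
        IsGeodesicSegment A x0 p ∧ IsGeodesicSegment B p (x1) ∧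
        IsGeodesicSegment C p q ∧ IsGeodesicSegment D q (x2) ∧
        IsGeodesicSegment E q (x3) ∧
        dist x0 p + dist p (x1) ≤ dist x0 (x1) + 4 ∧
        dist (x1) p + dist p q + dist q (x2) ≤ e12 + 4 ∧
        dist (x2) q + dist q (x3) ≤ e23 + 4 ∧
        dist x0 p + dist p q + dist q (x3) ≤ dist x0 (x3) + 4 ∧
        (∀ S : Set X, IsGeodesicSegment S x0 (x1) → InNbhd (A ∪ B) S 4) ∧
        (∀ S : Set X, IsGeodesicSegment S (x1) (x2) → InNbhd (B ∪ C ∪ D) S 4) ∧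
        (∀ S : Set X, IsGeodesicSegment S (x2) (x3) →
          InNbhd (D ∪ E) S 4) ∧
        (∀ S : Set X, IsGeodesicSegment S x0 (x3) → InNbhd (A ∪ C ∪ E) S 4) ∧
        (∀ (r : X) (sxr srg srgh : Set X), L15 x0 x1 x2 r e12 sxr srg srgh →
          InNbhd sxr A 5 ∧ InNbhd srg B 5 ∧ InNbhd srgh (C ∪ D) 5)) ∨
      -- Case (2): second type of thin quadrilateral
      (∃ A C Qg D P : Set X,
        IsGeodesicSegment A x0 p ∧ IsGeodesicSegment C p q ∧
        IsGeodesicSegment Qg q (x1) ∧ IsGeodesicSegment D q (x2) ∧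
        IsGeodesicSegment P p (x3) ∧
        dist x0 p + dist p q + dist q (x1) ≤ dist x0 (x1) + 4 ∧
        dist (x1) q + dist q (x2) ≤ e12 + 4 ∧
        dist (x2) q + dist q p + dist p (x3) ≤ e23 + 4 ∧
        dist x0 p + dist p (x3) ≤ dist x0 (x3) + 4 ∧
        (∀ S : Set X, IsGeodesicSegment S x0 (x1) → InNbhd C S 4) ∧
        (∀ S : Set X, IsGeodesicSegment S (x2) (x3) → InNbhd C S 4) ∧
        (∃ Sg : Set X, IsGeodesicSegment Sg x0 (x1) ∧ ∃ a' ∈ Sg, ∃ b' ∈ Sg,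
          ∃ τ : Set X, IsGeodesicSegment τ a' b' ∧ τ ⊆ Sg ∧
            dist p q ≤ dist a' b' ∧ InNbhd τ C 5) ∧
        (∃ Sf : Set X, IsGeodesicSegment Sf (x2) (x3) ∧
          ∃ a' ∈ Sf, ∃ b' ∈ Sf, ∃ τ : Set X, IsGeodesicSegment τ a' b' ∧ τ ⊆ Sf ∧
            dist p q ≤ dist a' b' ∧ InNbhd τ C 5) ∧
        (∀ S : Set X, IsGeodesicSegment S x0 (x1) → InNbhd (A ∪ C ∪ Qg) S 4) ∧
        (∀ S : Set X, IsGeodesicSegment S (x1) (x2) → InNbhd (Qg ∪ D) S 4) ∧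
        (∀ S : Set X, IsGeodesicSegment S (x2) (x3) →
          InNbhd (D ∪ C ∪ P) S 4) ∧
        (∀ S : Set X, IsGeodesicSegment S x0 (x3) → InNbhd (A ∪ P) S 4) ∧
        (∀ (r : X) (sxr srg srgh : Set X), L15 x0 x1 x2 r e12 sxr srg srgh →
          InNbhd sxr (A ∪ C) 5 ∧ InNbhd srg Qg 5 ∧ InNbhd srgh D 5)) := by
  subst he12; subst he23
  rcases le_total ((dist x0 x1 + dist x0 x2 - dist x1 x2) / 2)
      ((dist x0 x2 + dist x0 x3 - dist x2 x3) / 2) with hab | hba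
  · obtain ⟨p, q, rest⟩ := case1 hgeo hhyp x0 x1 x2 x3 hab
    exact ⟨p, q, Or.inl rest⟩
  · obtain ⟨p, q, rest⟩ := case2 hgeo hhyp x0 x1 x2 x3 hba
    exact ⟨p, q, Or.inr rest⟩

end L16

/-- **Lemma 16.** For `g, h, f ∈ G` acting by isometries on a `1`-hyperbolic geodesic
space with base point `x`, there are points `p, q` realizing one of the two types of
thin quadrilaterals for the product `ghf`, with all the length, neighborhood, and
compatibility (with any Lemma 15 data for the pair `(g,h)`) conditions. -/
theorem lemma16
    (G : Type*) [Group G] (X : Type*) [MetricSpace X] [MulAction G X]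
    (hgeo : GeodesicSpace X) (hhyp : DeltaHyperbolic X 1)
    (hiso : ∀ (g : G) (a b : X), dist (g • a) (g • b) = dist a b)
    (x : X) (g h f : G) :
    ∃ p q : X,
      -- Case (1): first type of thin quadrilateral
      (∃ A B C D E : Set X,
        IsGeodesicSegment A x p ∧ IsGeodesicSegment B p (g • x) ∧
        IsGeodesicSegment C p q ∧ IsGeodesicSegment D q ((g * h) • x) ∧
        IsGeodesicSegment E q ((g * h * f) • x) ∧
        dist x p + dist p (g • x) ≤ dist x (g • x) + 4 ∧
        dist (g • x) p + dist p q + dist q ((g * h) • x) ≤ dist x (h • x) + 4 ∧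
        dist ((g * h) • x) q + dist q ((g * h * f) • x) ≤ dist x (f • x) + 4 ∧
        dist x p + dist p q + dist q ((g * h * f) • x) ≤ dist x ((g * h * f) • x) + 4 ∧
        (∀ S : Set X, IsGeodesicSegment S x (g • x) → InNbhd (A ∪ B) S 4) ∧
        (∀ S : Set X, IsGeodesicSegment S (g • x) ((g * h) • x) → InNbhd (B ∪ C ∪ D) S 4) ∧
        (∀ S : Set X, IsGeodesicSegment S ((g * h) • x) ((g * h * f) • x) →
          InNbhd (D ∪ E) S 4) ∧
        (∀ S : Set X, IsGeodesicSegment S x ((g * h * f) • x) → InNbhd (A ∪ C ∪ E) S 4) ∧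
        (∀ (r : X) (sxr srg srgh : Set X), Lemma15Data x g h r sxr srg srgh →
          InNbhd sxr A 5 ∧ InNbhd srg B 5 ∧ InNbhd srgh (C ∪ D) 5)) ∨
      -- Case (2): second type of thin quadrilateral
      (∃ A C Qg D P : Set X,
        IsGeodesicSegment A x p ∧ IsGeodesicSegment C p q ∧
        IsGeodesicSegment Qg q (g • x) ∧ IsGeodesicSegment D q ((g * h) • x) ∧
        IsGeodesicSegment P p ((g * h * f) • x) ∧
        dist x p + dist p q + dist q (g • x) ≤ dist x (g • x) + 4 ∧
        dist (g • x) q + dist q ((g * h) • x) ≤ dist x (h • x) + 4 ∧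
        dist ((g * h) • x) q + dist q p + dist p ((g * h * f) • x) ≤ dist x (f • x) + 4 ∧
        dist x p + dist p ((g * h * f) • x) ≤ dist x ((g * h * f) • x) + 4 ∧
        (∀ S : Set X, IsGeodesicSegment S x (g • x) → InNbhd C S 4) ∧
        (∀ S : Set X, IsGeodesicSegment S ((g * h) • x) ((g * h * f) • x) → InNbhd C S 4) ∧
        (∃ Sg : Set X, IsGeodesicSegment Sg x (g • x) ∧ ∃ a' ∈ Sg, ∃ b' ∈ Sg,
          ∃ τ : Set X, IsGeodesicSegment τ a' b' ∧ τ ⊆ Sg ∧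
            dist p q ≤ dist a' b' ∧ InNbhd τ C 5) ∧
        (∃ Sf : Set X, IsGeodesicSegment Sf ((g * h) • x) ((g * h * f) • x) ∧
          ∃ a' ∈ Sf, ∃ b' ∈ Sf, ∃ τ : Set X, IsGeodesicSegment τ a' b' ∧ τ ⊆ Sf ∧
            dist p q ≤ dist a' b' ∧ InNbhd τ C 5) ∧
        (∀ S : Set X, IsGeodesicSegment S x (g • x) → InNbhd (A ∪ C ∪ Qg) S 4) ∧
        (∀ S : Set X, IsGeodesicSegment S (g • x) ((g * h) • x) → InNbhd (Qg ∪ D) S 4) ∧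
        (∀ S : Set X, IsGeodesicSegment S ((g * h) • x) ((g * h * f) • x) →
          InNbhd (D ∪ C ∪ P) S 4) ∧
        (∀ S : Set X, IsGeodesicSegment S x ((g * h * f) • x) → InNbhd (A ∪ P) S 4) ∧
        (∀ (r : X) (sxr srg srgh : Set X), Lemma15Data x g h r sxr srg srgh →
          InNbhd sxr (A ∪ C) 5 ∧ InNbhd srg Qg 5 ∧ InNbhd srgh D 5)) := by
  have he12 : dist (g • x) ((g * h) • x) = dist x (h • x) := by
    rw [mul_smul]; exact hiso g x (h • x)
  have he23 : dist ((g * h) • x) ((g * h * f) • x) = dist x (f • x) := by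
    have hs : (g * h * f) • x = (g * h) • (f • x) := mul_smul (g * h) f x
    rw [hs]; exact hiso (g * h) x (f • x)
  exact L16.master hgeo hhyp x (g • x) ((g * h) • x) ((g * h * f) • x) _ _ he12 he23
end
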